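/- arXiv:1312.1019 — 6 statements merged into one kernel-verified Lean document; each statement's English description precedes it below -/
import Mathlib

section
/- For every γ ∈ (0,π), the improper integral ∫_ℝ (1 + cos γ · cosh(2x sin γ)) / (cosh(2x sin γ) + cos γ)² dx equals 1/sin γ. -/
open MeasureTheory Real Set Filter

private lemma mtm_tendsto_aux (c : ℝ) (hc : -1 < c) :
    Tendsto (fun u : ℝ => Real.sinh u / (Real.cosh u + c)) atTop (nhds 1) := by
  have hden : ∀ t : ℝ, 0 < Real.cosh t + c := fun t => by nlinarith [Real.one_le_cosh t]
  have hGeq : ∀ u : ℝ, Real.sinh u / (Real.cosh u + c)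
      = (1 - Real.exp (-u) * Real.exp (-u)) /
        (1 + Real.exp (-u) * Real.exp (-u) + 2 * c * Real.exp (-u)) := by
    intro u
    have hab : Real.exp u * Real.exp (-u) = 1 := by
      rw [← Real.exp_add]; simp
    have hd1 : Real.cosh u + c ≠ 0 := (hden u).ne'
    have hd2 : 1 + Real.exp (-u) * Real.exp (-u) + 2 * c * Real.exp (-u) ≠ 0 := by
      have : 1 + Real.exp (-u) * Real.exp (-u) + 2 * c * Real.exp (-u)
          = 2 * Real.exp (-u) * (Real.cosh u + c) := by
        rw [Real.cosh_eq]; field_simp; linarith [hab]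
      rw [this]
      positivity
    rw [div_eq_div_iff hd1 hd2, Real.sinh_eq, Real.cosh_eq]
    linear_combination (Real.exp (-u) + c) * hab
  simp_rw [hGeq]
  have he : Tendsto (fun u : ℝ => Real.exp (-u)) atTop (nhds 0) :=
    Real.tendsto_exp_atBot.comp tendsto_neg_atTop_atBot
  have hnum : Tendsto (fun u : ℝ => 1 - Real.exp (-u) * Real.exp (-u)) atTop (nhds 1) := by
    simpa using tendsto_const_nhds.sub (he.mul he)
  have hden2 : Tendsto (fun u : ℝ => 1 + Real.exp (-u) * Real.exp (-u) + 2 * c * Real.exp (-u))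
      atTop (nhds 1) := by
    have h1 : Tendsto (fun u : ℝ => (1:ℝ) + Real.exp (-u) * Real.exp (-u) + 2 * c * Real.exp (-u))
        atTop (nhds (1 + 0 * 0 + 2 * c * 0)) :=
      ((tendsto_const_nhds.add (he.mul he)).add (he.const_mul (2*c)))
    simpa using h1
  simpa [Pi.div_def] using hnum.div hden2 one_ne_zero

/-- The explicit integral arising in the Lyapunov–Schmidt bifurcation equation. -/
theorem mtm_integral_eval (γ : ℝ) (hγ : γ ∈ Set.Ioo 0 Real.pi) :
    ∫ x : ℝ, (1 + Real.cos γ * Real.cosh (2 * x * Real.sin γ)) /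
      (Real.cosh (2 * x * Real.sin γ) + Real.cos γ) ^ 2 = 1 / Real.sin γ := by
  obtain ⟨hγ0, hγπ⟩ := hγ
  set s := Real.sin γ with hs_def
  set c := Real.cos γ with hc_def
  have hs : 0 < s := Real.sin_pos_of_pos_of_lt_pi hγ0 hγπ
  have hc1 : -1 < c := by
    have h2 : 0 < Real.cos (γ / 2) := Real.cos_pos_of_mem_Ioo
      ⟨by linarith [Real.pi_pos], by linarith⟩
    have h3 : Real.cos (γ/2) ^ 2 = 1/2 + Real.cos (2*(γ/2)) / 2 := Real.cos_sq (γ/2)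
    rw [show 2*(γ/2) = γ by ring] at h3
    nlinarith [h2]
  have hcle : c ≤ 1 := Real.cos_le_one γ
  have hden : ∀ t : ℝ, 0 < Real.cosh t + c := fun t => by nlinarith [Real.one_le_cosh t]
  set f : ℝ → ℝ := fun x => (1 + c * Real.cosh (2 * x * s)) /
      (Real.cosh (2 * x * s) + c) ^ 2 with hf_def
  set F : ℝ → ℝ := fun x => Real.sinh (2 * x * s) / (2 * s * (Real.cosh (2 * x * s) + c))
    with hF_def
  -- derivative
  have hderiv : ∀ x : ℝ, HasDerivAt F (f x) x := by
    intro x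
    have hu : HasDerivAt (fun x : ℝ => 2 * x * s) (2 * s) x := by
      simpa using ((hasDerivAt_id x).const_mul 2).mul_const s
    have h1 : HasDerivAt (fun x : ℝ => Real.sinh (2 * x * s))
        (Real.cosh (2 * x * s) * (2 * s)) x := (Real.hasDerivAt_sinh _).comp x hu
    have h2 : HasDerivAt (fun x : ℝ => 2 * s * (Real.cosh (2 * x * s) + c))
        (2 * s * (Real.sinh (2 * x * s) * (2 * s))) x :=
      (((Real.hasDerivAt_cosh _).comp x hu).add_const c).const_mul (2 * s)
    have hd0 : 2 * s * (Real.cosh (2 * x * s) + c) ≠ 0 :=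
      (mul_pos (by positivity) (hden _)).ne'
    have := h1.div h2 hd0
    convert this using 1
    show (1 + c * Real.cosh (2 * x * s)) / (Real.cosh (2 * x * s) + c) ^ 2 = _
    have hid := Real.cosh_sq_sub_sinh_sq (2 * x * s)
    rw [div_eq_div_iff (pow_pos (hden _) 2).ne'
      (pow_pos (mul_pos (by positivity) (hden _)) 2).ne']
    linear_combination (-4 * s^2 * (Real.cosh (2*x*s) + c)^2) * hid
    all_goals rfl
  -- continuity of f
  have hf_cont : Continuous f := by
    rw [hf_def]
    exact Continuous.div (by fun_prop) (by fun_prop)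
      (fun x => (pow_pos (hden _) 2).ne')
  -- integrability of f
  have hint : Integrable f := by
    apply hf_cont.locallyIntegrable.integrable_of_isBigO_atTop_of_norm_isNegInvariant
      (g := fun x : ℝ => Real.exp (-(2 * s) * x))
    · apply Filter.EventuallyEq.of_eq; funext x
      have hx : f (-x) = f x := by
        rw [hf_def]
        simp only
        rw [show 2 * (-x) * s = -(2 * x * s) by ring, Real.cosh_neg]
      simp [Function.comp, hx]
    · rw [Asymptotics.isBigO_iff]
      refine ⟨16 / (1 + c) ^ 2, Filter.Eventually.of_forall fun x => ?_⟩
      set ch := Real.cosh (2 * x * s) with hch_def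
      have hch : 1 ≤ ch := Real.one_le_cosh _
      have hE : Real.exp (2 * x * s) ≤ 2 * ch := by
        rw [hch_def, Real.cosh_eq]
        have := Real.exp_pos (-(2 * x * s))
        linarith
      have hN : |1 + c * ch| ≤ 2 * ch := by
        rw [abs_le]; constructor <;> nlinarith
      have hDle : (1 + c) / 2 * ch ≤ ch + c := by nlinarith
      have hD2 : ((1 + c) / 2 * ch) ^ 2 ≤ (ch + c) ^ 2 := by
        apply pow_le_pow_left₀ (mul_nonneg (by linarith) (by linarith)) hDle
      have hexp : Real.exp (-(2 * s) * x) = (Real.exp (2 * x * s))⁻¹ := by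
        rw [← Real.exp_neg]; ring_nf
      have key : |1 + c * ch| * ((1 + c) ^ 2 * Real.exp (2 * x * s)) ≤ 16 * (ch + c) ^ 2 := by
        nlinarith [mul_le_mul hN hE (Real.exp_pos _).le (by positivity : (0:ℝ) ≤ 2 * ch),
          mul_le_mul_of_nonneg_right
            (mul_le_mul hN hE (Real.exp_pos _).le (by positivity : (0:ℝ) ≤ 2 * ch))
            (sq_nonneg (1 + c)), hD2]
      rw [hf_def]
      simp only [Real.norm_eq_abs, ← hch_def]
      rw [abs_div, abs_of_pos (Real.exp_pos _), abs_of_pos (pow_pos (hden (2*x*s)) 2), hexp]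
      rw [div_le_iff₀ (pow_pos (hden (2*x*s)) 2)]
      rw [div_mul_eq_mul_div, div_mul_eq_mul_div,
        le_div_iff₀ (pow_pos (by linarith : (0:ℝ) < 1 + c) 2)]
      rw [show (16:ℝ) * (Real.exp (2*x*s))⁻¹ * (ch + c)^2
          = 16 * (ch + c)^2 * (Real.exp (2*x*s))⁻¹ by ring, ← div_eq_mul_inv,
        le_div_iff₀ (Real.exp_pos _)]
      nlinarith [key]
    · exact ⟨Ioi 0, Ioi_mem_atTop 0, exp_neg_integrableOn_Ioi 0 (by positivity)⟩
  -- limits at infinity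
  have hG := mtm_tendsto_aux c hc1
  have hlin : Tendsto (fun x : ℝ => 2 * x * s) atTop atTop := by
    apply Filter.Tendsto.atTop_mul_const hs
    exact tendsto_id.const_mul_atTop two_pos
  have hFeq : ∀ x : ℝ, F x =
      Real.sinh (2*x*s) / (Real.cosh (2*x*s) + c) * (1/(2*s)) := by
    intro x
    rw [hF_def]
    have hD := (hden (2*x*s)).ne'
    field_simp
  have htop : Tendsto F atTop (nhds (1/(2*s))) := by
    rw [show F = fun x : ℝ =>
        Real.sinh (2*x*s) / (Real.cosh (2*x*s) + c) * (1/(2*s)) from funext hFeq]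
    simpa using (hG.comp hlin).mul_const (1/(2*s))
  have hbot : Tendsto F atBot (nhds (-(1/(2*s)))) := by
    have hodd : ∀ x : ℝ, F x = -(F (-x)) := by
      intro x
      rw [hF_def]
      simp only
      rw [show 2 * (-x) * s = -(2 * x * s) by ring, Real.sinh_neg, Real.cosh_neg, neg_div,
        neg_neg]
    have h2 : Tendsto (fun x : ℝ => F (-x)) atBot (nhds (1/(2*s))) :=
      htop.comp tendsto_neg_atBot_atTop
    have h3 := h2.neg
    rwa [show (fun x : ℝ => -(F (-x))) = F from funext fun x => (hodd x).symm] at h3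
  have hI := integral_of_hasDerivAt_of_tendsto hderiv hint hbot htop
  rw [show (∫ x : ℝ, (1 + c * Real.cosh (2 * x * s)) / (Real.cosh (2 * x * s) + c) ^ 2)
      = ∫ x : ℝ, f x from rfl, hI]
  rw [sub_neg_eq_add]
  field_simp
  norm_num
end

section
/- Let γ ∈ (0,π) and define the 2×2 matrix-valued function M_γ(x) with entries M_γ(1,1) = -sin γ/2, M_γ(2,2) = sin γ/2, M_γ(1,2) = (i/2)(e^{-iγ/2} conj(u_γ(x)) - e^{iγ/2} conj(v_γ(x))), M_γ(2,1) = (i/2)(e^{-iγ/2} u_γ(x) - e^{iγ/2} v_γ(x)), where u_γ(x) = i sin γ sech(x sin γ - iγ/2) and v_γ(x) = -i sin γ sech(x sin γ + iγ/2). Then the vector φ_γ(x) = (e^{(x/2) sin γ}, e^{-(x/2) sin γ})ᵗ |sech(x sin γ - iγ/2)| satisfies φ_γ'(x) = M_γ(x) φ_γ(x) for all x ∈ ℝ. -/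
noncomputable def sech (z : ℂ) : ℂ := (Complex.cosh z)⁻¹

noncomputable def uSol (γ x : ℝ) : ℂ :=
  Complex.I * Real.sin γ * sech ((x : ℂ) * Real.sin γ - Complex.I * γ / 2)

noncomputable def vSol (γ x : ℝ) : ℂ :=
  -Complex.I * Real.sin γ * sech ((x : ℂ) * Real.sin γ + Complex.I * γ / 2)

noncomputable def Mmat (γ x : ℝ) : Matrix (Fin 2) (Fin 2) ℂ :=
  !![-(Real.sin γ : ℂ) / 2,
     (Complex.I / 2) * (Complex.exp (-Complex.I * γ / 2) * (starRingEnd ℂ) (uSol γ x)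
        - Complex.exp (Complex.I * γ / 2) * (starRingEnd ℂ) (vSol γ x));
     (Complex.I / 2) * (Complex.exp (-Complex.I * γ / 2) * uSol γ x
        - Complex.exp (Complex.I * γ / 2) * vSol γ x),
     (Real.sin γ : ℂ) / 2]

noncomputable def phiVec (γ x : ℝ) : Fin 2 → ℂ :=
  ![((Real.exp (x / 2 * Real.sin γ) *
      ‖sech ((x : ℂ) * Real.sin γ - Complex.I * γ / 2)‖ : ℝ) : ℂ),
    ((Real.exp (-(x / 2) * Real.sin γ) *
      ‖sech ((x : ℂ) * Real.sin γ - Complex.I * γ / 2)‖ : ℝ) : ℂ)]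

section aux
open Complex

lemma cosh_sub_I' (a b : ℝ) : Complex.cosh (↑a - ↑b * I) =
    ↑(Real.cosh a * Real.cos b) - ↑(Real.sinh a * Real.sin b) * I := by
  rw [Complex.cosh_sub, Complex.cosh_mul_I, Complex.sinh_mul_I]; push_cast; ring

lemma cosh_add_I' (a b : ℝ) : Complex.cosh (↑a + ↑b * I) =
    ↑(Real.cosh a * Real.cos b) + ↑(Real.sinh a * Real.sin b) * I := by
  rw [Complex.cosh_add, Complex.cosh_mul_I, Complex.sinh_mul_I]; push_cast; ring

lemma normSq_ofReal_sub_ofReal_mul_I (p q : ℝ) :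
    Complex.normSq (↑p - ↑q*Complex.I) = p^2+q^2 := by
  rw [Complex.normSq_apply]
  simp
  ring

lemma conj_sech' (z : ℂ) : (starRingEnd ℂ) (sech z) = sech ((starRingEnd ℂ) z) := by
  rw [sech, sech, map_inv₀, Complex.cosh_conj]

lemma inv_sqrt_deriv_form (d Kx T : ℝ) (hT : T ≠ 0) (hK : Kx ≠ 0) (h2 : T^2 = Kx) :
    -(d/(2*T))/T^2 = -(d/(2*Kx))*T⁻¹ := by
  rw [← h2]
  field_simp

end aux

/-- The decaying eigenvector satisfies φ' = M_γ φ. -/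
theorem phiVec_hasDerivAt (γ : ℝ) (hγ : γ ∈ Set.Ioo 0 Real.pi) (x : ℝ) :
    HasDerivAt (fun y : ℝ => phiVec γ y) ((Mmat γ x).mulVec (phiVec γ x)) x := by
  obtain ⟨hγ0, hγπ⟩ := hγ
  have hs : 0 < Real.sin γ := Real.sin_pos_of_pos_of_lt_pi hγ0 hγπ
  have hcg : 0 < Real.cos (γ/2) := by
    apply Real.cos_pos_of_mem_Ioo
    constructor <;> [linarith [Real.pi_pos]; linarith]
  set K : ℝ → ℝ := fun y =>
    Real.cosh (y*Real.sin γ)^2*Real.cos (γ/2)^2 + Real.sinh (y*Real.sin γ)^2*Real.sin (γ/2)^2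
    with hKdef
  have hKpos : ∀ y, 0 < K y := by
    intro y
    have h1 : 0 < Real.cosh (y*Real.sin γ)^2*Real.cos (γ/2)^2 := by
      have h2 := Real.cosh_pos (y*Real.sin γ)
      positivity
    have h3 : 0 ≤ Real.sinh (y*Real.sin γ)^2*Real.sin (γ/2)^2 := by positivity
    simp only [hKdef]
    linarith
  -- the absolute value of sech
  have habs : ∀ y : ℝ, ‖sech ((y:ℂ) * Real.sin γ - Complex.I * γ / 2)‖
      = (Real.sqrt (K y))⁻¹ := by
    intro y
    have harg : ((y:ℂ) * Real.sin γ - Complex.I * γ / 2)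
        = (↑(y*Real.sin γ) - ↑(γ/2) * Complex.I : ℂ) := by push_cast; ring
    rw [sech, harg, norm_inv, cosh_sub_I', Complex.norm_def,
      normSq_ofReal_sub_ofReal_mul_I]
    congr 2
    simp only [hKdef]
    ring
  -- notation shortcuts (as local facts)
  have hKcne : ((K x : ℝ) : ℂ) ≠ 0 := by exact_mod_cast (hKpos x).ne'
  -- the product of the two cosh values
  have hprod : ((↑(Real.cosh (x*Real.sin γ) * Real.cos (γ/2)) +
        ↑(Real.sinh (x*Real.sin γ) * Real.sin (γ/2)) * Complex.I) *
      (↑(Real.cosh (x*Real.sin γ) * Real.cos (γ/2)) -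
        ↑(Real.sinh (x*Real.sin γ) * Real.sin (γ/2)) * Complex.I) : ℂ) = ↑(K x) := by
    have hKx : K x = (Real.cosh (x*Real.sin γ) * Real.cos (γ/2))^2
        + (Real.sinh (x*Real.sin γ) * Real.sin (γ/2))^2 := by
      simp only [hKdef]; ring
    rw [hKx]
    push_cast [-Complex.ofReal_sin, -Complex.ofReal_cos, -Complex.ofReal_sinh, -Complex.ofReal_cosh]
    linear_combination (-((Real.sinh (x*Real.sin γ):ℂ))^2*((Real.sin (γ/2):ℂ))^2) * Complex.I_sq
  have hCmne : ((↑(Real.cosh (x*Real.sin γ) * Real.cos (γ/2)) -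
      ↑(Real.sinh (x*Real.sin γ) * Real.sin (γ/2)) * Complex.I : ℂ)) ≠ 0 := by
    intro h
    apply hKcne
    rw [← hprod, h, mul_zero]
  have hCpne : ((↑(Real.cosh (x*Real.sin γ) * Real.cos (γ/2)) +
      ↑(Real.sinh (x*Real.sin γ) * Real.sin (γ/2)) * Complex.I : ℂ)) ≠ 0 := by
    intro h
    apply hKcne
    rw [← hprod, h, zero_mul]
  have hargm : ((x:ℂ) * Real.sin γ - Complex.I * γ / 2)
      = (↑(x*Real.sin γ) - ↑(γ/2) * Complex.I : ℂ) := by push_cast; ring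
  have hargp : ((x:ℂ) * Real.sin γ + Complex.I * γ / 2)
      = (↑(x*Real.sin γ) + ↑(γ/2) * Complex.I : ℂ) := by push_cast; ring
  have hsechm : sech ((x:ℂ) * Real.sin γ - Complex.I * γ / 2)
      = (↑(Real.cosh (x*Real.sin γ) * Real.cos (γ/2)) +
          ↑(Real.sinh (x*Real.sin γ) * Real.sin (γ/2)) * Complex.I)/↑(K x) := by
    rw [sech, hargm, cosh_sub_I', eq_div_iff hKcne, inv_mul_eq_div, div_eq_iff hCmne]
    linear_combination -hprod
  have hsechp : sech ((x:ℂ) * Real.sin γ + Complex.I * γ / 2)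
      = (↑(Real.cosh (x*Real.sin γ) * Real.cos (γ/2)) -
          ↑(Real.sinh (x*Real.sin γ) * Real.sin (γ/2)) * Complex.I)/↑(K x) := by
    rw [sech, hargp, cosh_add_I', eq_div_iff hKcne, inv_mul_eq_div, div_eq_iff hCpne]
    linear_combination -hprod
  have hconj_arg : (starRingEnd ℂ) ((x:ℂ) * Real.sin γ - Complex.I * γ / 2)
      = ((x:ℂ) * Real.sin γ + Complex.I * γ / 2) := by
    simp only [map_sub, map_mul, map_div₀, Complex.conj_I, Complex.conj_ofReal, map_ofNat]
    ring
  have hconju : (starRingEnd ℂ) (uSol γ x)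
      = -Complex.I * ↑(Real.sin γ) * ((↑(Real.cosh (x*Real.sin γ) * Real.cos (γ/2)) -
          ↑(Real.sinh (x*Real.sin γ) * Real.sin (γ/2)) * Complex.I)/↑(K x)) := by
    rw [uSol, map_mul, map_mul, conj_sech', hconj_arg, hsechp]
    rw [Complex.conj_I, Complex.conj_ofReal]
  have hconjv : (starRingEnd ℂ) (vSol γ x)
      = Complex.I * ↑(Real.sin γ) * ((↑(Real.cosh (x*Real.sin γ) * Real.cos (γ/2)) +
          ↑(Real.sinh (x*Real.sin γ) * Real.sin (γ/2)) * Complex.I)/↑(K x)) := by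
    have hconj_argp : (starRingEnd ℂ) ((x:ℂ) * Real.sin γ + Complex.I * γ / 2)
        = ((x:ℂ) * Real.sin γ - Complex.I * γ / 2) := by
      simp only [map_add, map_mul, map_div₀, Complex.conj_I, Complex.conj_ofReal, map_ofNat]
      ring
    rw [vSol, map_mul, map_mul, conj_sech', hconj_argp, hsechm]
    rw [map_neg, Complex.conj_I, Complex.conj_ofReal]
    ring
  have hexpp : Complex.exp (Complex.I * ↑γ / 2)
      = ↑(Real.cos (γ/2)) + ↑(Real.sin (γ/2)) * Complex.I := by
    rw [show Complex.I * (γ:ℂ)/2 = ((γ/2 : ℝ):ℂ) * Complex.I by push_cast; ring,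
      Complex.exp_mul_I, ← Complex.ofReal_cos, ← Complex.ofReal_sin]
  have hexpm : Complex.exp (-Complex.I * ↑γ / 2)
      = ↑(Real.cos (γ/2)) - ↑(Real.sin (γ/2)) * Complex.I := by
    rw [show -Complex.I * (γ:ℂ)/2 = ((-(γ/2) : ℝ):ℂ) * Complex.I by push_cast; ring,
      Complex.exp_mul_I, ← Complex.ofReal_cos, ← Complex.ofReal_sin]
    push_cast [Real.cos_neg, Real.sin_neg]
    ring
  -- matrix entries
  have hM01 : Complex.I / 2 * (Complex.exp (-Complex.I * ↑γ / 2) * (starRingEnd ℂ) (uSol γ x)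
        - Complex.exp (Complex.I * ↑γ / 2) * (starRingEnd ℂ) (vSol γ x))
      = ↑(Real.sin γ * (Real.cos (γ/2)^2 * Real.cosh (x*Real.sin γ)
          - Real.sin (γ/2)^2 * Real.sinh (x*Real.sin γ)) / (K x)) := by
    rw [hconju, hconjv, hexpp, hexpm]
    push_cast [-Complex.ofReal_sin, -Complex.ofReal_cos, -Complex.ofReal_sinh, -Complex.ofReal_cosh]
    linear_combination (-((Real.sin γ : ℂ))*(((Real.cosh (x*Real.sin γ):ℂ))*((Real.cos (γ/2):ℂ))^2
      + ((Real.sin (γ/2):ℂ))^2*((Real.sinh (x*Real.sin γ):ℂ))*(Complex.I^2-1))/((K x : ℝ):ℂ)) * Complex.I_sq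
  have hM10 : Complex.I / 2 * (Complex.exp (-Complex.I * ↑γ / 2) * uSol γ x
        - Complex.exp (Complex.I * ↑γ / 2) * vSol γ x)
      = ↑(-(Real.sin γ * (Real.cos (γ/2)^2 * Real.cosh (x*Real.sin γ)
          + Real.sin (γ/2)^2 * Real.sinh (x*Real.sin γ))) / (K x)) := by
    rw [uSol, vSol, hsechm, hsechp, hexpp, hexpm]
    push_cast [-Complex.ofReal_sin, -Complex.ofReal_cos, -Complex.ofReal_sinh, -Complex.ofReal_cosh]
    linear_combination (((Real.sin γ : ℂ))*(((Real.cosh (x*Real.sin γ):ℂ))*((Real.cos (γ/2):ℂ))^2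
      - ((Real.sin (γ/2):ℂ))^2*((Real.sinh (x*Real.sin γ):ℂ))*(Complex.I^2-1))/((K x : ℝ):ℂ)) * Complex.I_sq
  -- derivative of K
  have hlin : HasDerivAt (fun y:ℝ => y*Real.sin γ) (Real.sin γ) x := hasDerivAt_mul_const _
  have hcosh := (Real.hasDerivAt_cosh (x*Real.sin γ)).comp x hlin
  have hsinh := (Real.hasDerivAt_sinh (x*Real.sin γ)).comp x hlin
  have hKd : HasDerivAt K
      (2*Real.cosh (x*Real.sin γ)*Real.sinh (x*Real.sin γ)*Real.sin γ*Real.cos (γ/2)^2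
        + 2*Real.cosh (x*Real.sin γ)*Real.sinh (x*Real.sin γ)*Real.sin γ*Real.sin (γ/2)^2) x := by
    have h2 := ((hcosh.pow 2).mul_const (Real.cos (γ/2)^2)).add
      ((hsinh.pow 2).mul_const (Real.sin (γ/2)^2))
    rw [hKdef]
    refine h2.congr_deriv ?_
    simp only [Function.comp_apply]
    push_cast
    ring
  have hT0 : (0:ℝ) < Real.sqrt (K x) := Real.sqrt_pos.2 (hKpos x)
  have hrinv := (hKd.sqrt (hKpos x).ne').inv hT0.ne'
  rw [inv_sqrt_deriv_form _ _ _ hT0.ne' (hKpos x).ne' (Real.sq_sqrt (hKpos x).le)] at hrinv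
  -- exponential facts
  have hwne : Real.exp (x/2*Real.sin γ) ≠ 0 := Real.exp_ne_zero _
  have hww : Real.exp (x*Real.sin γ) = Real.exp (x/2*Real.sin γ) * Real.exp (x/2*Real.sin γ) := by
    rw [← Real.exp_add]; congr 1; ring
  have hch : Real.cosh (x*Real.sin γ) = (Real.exp (x/2*Real.sin γ)*Real.exp (x/2*Real.sin γ) + (Real.exp (x/2*Real.sin γ)*Real.exp (x/2*Real.sin γ))⁻¹)/2 := by
    rw [Real.cosh_eq, Real.exp_neg, hww]
  have hsh : Real.sinh (x*Real.sin γ) = (Real.exp (x/2*Real.sin γ)*Real.exp (x/2*Real.sin γ) - (Real.exp (x/2*Real.sin γ)*Real.exp (x/2*Real.sin γ))⁻¹)/2 := by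
    rw [Real.sinh_eq, Real.exp_neg, hww]
  have hw2 : Real.exp (-(x/2)*Real.sin γ) = (Real.exp (x/2*Real.sin γ))⁻¹ := by
    rw [show -(x/2)*Real.sin γ = -(x/2*Real.sin γ) by ring, Real.exp_neg]
  have hKxw : K x = ((Real.exp (x/2*Real.sin γ)*Real.exp (x/2*Real.sin γ) + (Real.exp (x/2*Real.sin γ)*Real.exp (x/2*Real.sin γ))⁻¹)/2)^2*Real.cos (γ/2)^2 + ((Real.exp (x/2*Real.sin γ)*Real.exp (x/2*Real.sin γ) - (Real.exp (x/2*Real.sin γ)*Real.exp (x/2*Real.sin γ))⁻¹)/2)^2*Real.sin (γ/2)^2 := by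
    simp only [hKdef]
    rw [hch, hsh]
  have hKwne : ((Real.exp (x/2*Real.sin γ)*Real.exp (x/2*Real.sin γ) + (Real.exp (x/2*Real.sin γ)*Real.exp (x/2*Real.sin γ))⁻¹)/2)^2*Real.cos (γ/2)^2 + ((Real.exp (x/2*Real.sin γ)*Real.exp (x/2*Real.sin γ) - (Real.exp (x/2*Real.sin γ)*Real.exp (x/2*Real.sin γ))⁻¹)/2)^2*Real.sin (γ/2)^2 ≠ 0 := by rw [← hKxw]; exact (hKpos x).ne'
  -- derivatives of the exponential prefactors
  have hexp1 : HasDerivAt (fun y:ℝ => Real.exp (y/2*Real.sin γ))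
      (Real.exp (x/2*Real.sin γ) * (1/2*Real.sin γ)) x :=
    (Real.hasDerivAt_exp _).comp x (((hasDerivAt_id x).div_const 2).mul_const _)
  have hexp2 : HasDerivAt (fun y:ℝ => Real.exp (-(y/2)*Real.sin γ))
      (Real.exp (-(x/2)*Real.sin γ) * (-(1/2)*Real.sin γ)) x :=
    (Real.hasDerivAt_exp _).comp x ((((hasDerivAt_id x).div_const 2).neg).mul_const _)
  apply hasDerivAt_pi.mpr
  intro i
  fin_cases i
  · -- component 0
    have hfun0 : (fun y:ℝ => phiVec γ y 0)
        = fun y:ℝ => ((Real.exp (y/2*Real.sin γ) * (Real.sqrt (K y))⁻¹ : ℝ) : ℂ) := by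
      funext y
      simp only [phiVec, Matrix.cons_val_zero]
      rw [habs y]
    have hval : (Mmat γ x).mulVec (phiVec γ x) 0
        = ((Real.exp (x/2*Real.sin γ) * (1/2*Real.sin γ) * (Real.sqrt (K x))⁻¹
          + Real.exp (x/2*Real.sin γ) * (-((2*Real.cosh (x*Real.sin γ)*Real.sinh (x*Real.sin γ)*Real.sin γ*Real.cos (γ/2)^2
            + 2*Real.cosh (x*Real.sin γ)*Real.sinh (x*Real.sin γ)*Real.sin γ*Real.sin (γ/2)^2)/(2*(K x)))
            * (Real.sqrt (K x))⁻¹) : ℝ) : ℂ) := by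
      simp only [Matrix.mulVec, dotProduct, Fin.sum_univ_two, Mmat, phiVec,
        Matrix.cons_val', Matrix.cons_val_zero, Matrix.cons_val_one, Matrix.head_cons,
        Matrix.empty_val', Matrix.cons_val_fin_one, Matrix.head_fin_const, Matrix.of_apply]
      rw [habs x, hM01]
      rw [show (-(↑(Real.sin γ):ℂ)/2) = ((-(Real.sin γ)/2 : ℝ):ℂ) by push_cast; ring]
      rw [← Complex.ofReal_mul, ← Complex.ofReal_mul, ← Complex.ofReal_add,
        Complex.ofReal_inj]
      generalize (Real.sqrt (K x))⁻¹ = Ti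
      rw [hKxw, hch, hsh, hw2]
      field_simp
      ring
    show HasDerivAt (fun y => phiVec γ y 0) ((Mmat γ x).mulVec (phiVec γ x) 0) x
    rw [hfun0, hval]
    exact (hexp1.mul hrinv).ofReal_comp
  · -- component 1
    have hfun1 : (fun y:ℝ => phiVec γ y 1)
        = fun y:ℝ => ((Real.exp (-(y/2)*Real.sin γ) * (Real.sqrt (K y))⁻¹ : ℝ) : ℂ) := by
      funext y
      simp only [phiVec, Matrix.cons_val_one, Matrix.head_cons, Matrix.cons_val_zero]
      rw [habs y]
    have hval : (Mmat γ x).mulVec (phiVec γ x) 1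
        = ((Real.exp (-(x/2)*Real.sin γ) * (-(1/2)*Real.sin γ) * (Real.sqrt (K x))⁻¹
          + Real.exp (-(x/2)*Real.sin γ) * (-((2*Real.cosh (x*Real.sin γ)*Real.sinh (x*Real.sin γ)*Real.sin γ*Real.cos (γ/2)^2
            + 2*Real.cosh (x*Real.sin γ)*Real.sinh (x*Real.sin γ)*Real.sin γ*Real.sin (γ/2)^2)/(2*(K x)))
            * (Real.sqrt (K x))⁻¹) : ℝ) : ℂ) := by
      simp only [Matrix.mulVec, dotProduct, Fin.sum_univ_two, Mmat, phiVec,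
        Matrix.cons_val', Matrix.cons_val_zero, Matrix.cons_val_one, Matrix.head_cons,
        Matrix.empty_val', Matrix.cons_val_fin_one, Matrix.head_fin_const, Matrix.of_apply]
      rw [habs x, hM10]
      rw [show ((↑(Real.sin γ):ℂ)/2) = ((Real.sin γ/2 : ℝ):ℂ) by push_cast; ring]
      rw [← Complex.ofReal_mul, ← Complex.ofReal_mul, ← Complex.ofReal_add,
        Complex.ofReal_inj]
      generalize (Real.sqrt (K x))⁻¹ = Ti
      rw [hKxw, hch, hsh, hw2]
      field_simp
      ring
    show HasDerivAt (fun y => phiVec γ y 1) ((Mmat γ x).mulVec (phiVec γ x) 1) x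
    rw [hfun1, hval]
    exact (hexp2.mul hrinv).ofReal_comp
end

section
/- Let γ ∈ (0,π) and M_γ be as in the eigenvector lemma for the MTM soliton. Then the vector η_γ(x) = (e^{-(x/2) sin γ}, -e^{(x/2) sin γ})ᵗ |sech(x sin γ - iγ/2)| satisfies η_γ'(x) = -M_γ(x)* η_γ(x) for all x ∈ ℝ, where M* denotes the conjugate transpose. -/
noncomputable def etaVec (γ x : ℝ) : Fin 2 → ℂ :=
  ![((Real.exp (-(x / 2) * Real.sin γ) *
      ‖sech ((x : ℂ) * Real.sin γ - Complex.I * γ / 2)‖ : ℝ) : ℂ),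
    ((-(Real.exp (x / 2 * Real.sin γ) *
      ‖sech ((x : ℂ) * Real.sin γ - Complex.I * γ / 2)‖) : ℝ) : ℂ)]

lemma coshz_sub (a b : ℝ) :
    Complex.cosh ((a:ℂ) - Complex.I * b) =
      ((Real.cosh a * Real.cos b : ℝ) : ℂ) - Complex.I * ((Real.sinh a * Real.sin b : ℝ) : ℂ) := by
  have h : (Complex.I : ℂ) * b = (b:ℂ) * Complex.I := mul_comm _ _
  rw [h, Complex.cosh_sub, Complex.cosh_mul_I, Complex.sinh_mul_I]
  push_cast
  ring

lemma coshz_add (a b : ℝ) :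
    Complex.cosh ((a:ℂ) + Complex.I * b) =
      ((Real.cosh a * Real.cos b : ℝ) : ℂ) + Complex.I * ((Real.sinh a * Real.sin b : ℝ) : ℂ) := by
  have h : (Complex.I : ℂ) * b = (b:ℂ) * Complex.I := mul_comm _ _
  rw [h, Complex.cosh_add, Complex.cosh_mul_I, Complex.sinh_mul_I]
  push_cast
  ring

lemma abs_sub_I (r1 r2 : ℝ) :
    ‖(r1:ℂ) - Complex.I * r2‖ = Real.sqrt (r1^2 + r2^2) := by
  rw [Complex.norm_def, Complex.normSq_apply]
  simp
  ring_nf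

set_option maxHeartbeats 1000000 in
/-- The adjoint null vector satisfies η' = -M_γ* η. -/
theorem etaVec_hasDerivAt (γ : ℝ) (hγ : γ ∈ Set.Ioo 0 Real.pi) (x : ℝ) :
    HasDerivAt (fun y : ℝ => etaVec γ y) ((-(Mmat γ x).conjTranspose).mulVec (etaVec γ x)) x := by
  obtain ⟨hγ0, hγπ⟩ := hγ
  have hπ := Real.pi_pos
  have hs : 0 < Real.sin γ := Real.sin_pos_of_pos_of_lt_pi hγ0 hγπ
  have hc : 0 < Real.cos (γ/2) :=
    Real.cos_pos_of_mem_Ioo ⟨by linarith, by linarith⟩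
  set s := Real.sin γ with hs_def
  set c := Real.cos (γ/2) with hc_def
  set sn := Real.sin (γ/2) with hsn_def
  have hcs : sn^2 + c^2 = 1 := Real.sin_sq_add_cos_sq _
  set G : ℝ → ℝ := fun y => (Real.cosh (y*s))^2 * c^2 + (Real.sinh (y*s))^2 * sn^2 with hG_def
  have hGpos : ∀ y, 0 < G y := by
    intro y
    have h1 := Real.one_le_cosh (y*s)
    have h2 := sq_nonneg (Real.sinh (y*s) * sn)
    have h3 : 0 < Real.cosh (y*s)^2 * c^2 :=
      mul_pos (pow_pos (Real.cosh_pos (y*s)) 2) (pow_pos hc 2)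
    simp only [hG_def]
    nlinarith
  have habs : ∀ y : ℝ, ‖sech ((y:ℂ) * Real.sin γ - Complex.I * γ / 2)‖
      = (Real.sqrt (G y))⁻¹ := by
    intro y
    have harg : ((y:ℂ) * Real.sin γ - Complex.I * γ / 2)
        = ((y*s : ℝ):ℂ) - Complex.I * ((γ/2 : ℝ):ℂ) := by push_cast [hs_def]; ring
    rw [sech, norm_inv, harg, coshz_sub, abs_sub_I]
    congr 1
    rw [hG_def, ← hc_def, ← hsn_def]
    ring
  set ch := Real.cosh (x*s) with hch_def
  set sh := Real.sinh (x*s) with hsh_def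
  set A := Real.sqrt (G x) with hA_def
  have hApos : 0 < A := Real.sqrt_pos.mpr (hGpos x)
  set E := Real.exp (x/2*s) with hE_def
  have hEpos : 0 < E := Real.exp_pos _
  -- derivatives
  have hmul : HasDerivAt (fun y : ℝ => y * s) s x := by
    simpa using hasDerivAt_mul_const (c := s) (x := x)
  have hcosh : HasDerivAt (fun y => Real.cosh (y*s)) (sh * s) x :=
    by have h := (Real.hasDerivAt_cosh (x*s)).comp x hmul; exact h
  have hsinh : HasDerivAt (fun y => Real.sinh (y*s)) (ch * s) x :=
    by have h := (Real.hasDerivAt_sinh (x*s)).comp x hmul; exact h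
  have hG' : HasDerivAt G (2*s*ch*sh) x := by
    have h1 := ((hcosh.pow 2).mul_const (c^2)).add ((hsinh.pow 2).mul_const (sn^2))
    refine h1.congr_deriv ?_
    rw [← hch_def]
    linear_combination (2*s*ch*sh) * hcs
  have hsq : HasDerivAt (fun y => Real.sqrt (G y)) (2*s*ch*sh / (2*A)) x :=
    hG'.sqrt (hGpos x).ne'
  have hinv : HasDerivAt (fun y => (Real.sqrt (G y))⁻¹) (-(2*s*ch*sh / (2*A)) / A^2) x :=
    hsq.inv hApos.ne'
  have hexp1 : HasDerivAt (fun y : ℝ => Real.exp (-(y/2)*s)) (Real.exp (-(x/2)*s) * (-(1/2)*s)) x := by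
    have hin : HasDerivAt (fun y : ℝ => -(y/2)*s) (-(1/2)*s) x := by
      simpa using (((hasDerivAt_id x).div_const 2).neg.mul_const s)
    exact hin.exp
  have hexp2 : HasDerivAt (fun y : ℝ => Real.exp (y/2*s)) (Real.exp (x/2*s) * (1/2*s)) x := by
    have hin : HasDerivAt (fun y : ℝ => y/2*s) (1/2*s) x := by
      simpa using (((hasDerivAt_id x).div_const 2).mul_const s)
    exact hin.exp
  have hf1 : HasDerivAt (fun y => Real.exp (-(y/2)*s) * (Real.sqrt (G y))⁻¹)
      (Real.exp (-(x/2)*s) * (-(1/2)*s) * (Real.sqrt (G x))⁻¹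
        + Real.exp (-(x/2)*s) * (-(2*s*ch*sh / (2*A)) / A^2)) x := hexp1.mul hinv
  have hf2 : HasDerivAt (fun y => -(Real.exp (y/2*s) * (Real.sqrt (G y))⁻¹))
      (-(Real.exp (x/2*s) * (1/2*s) * (Real.sqrt (G x))⁻¹
        + Real.exp (x/2*s) * (-(2*s*ch*sh / (2*A)) / A^2))) x := (hexp2.mul hinv).neg
  set d1 : ℝ := Real.exp (-(x/2)*s) * (-(1/2)*s) * (Real.sqrt (G x))⁻¹
        + Real.exp (-(x/2)*s) * (-(2*s*ch*sh / (2*A)) / A^2) with hd1_def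
  set d2 : ℝ := -(Real.exp (x/2*s) * (1/2*s) * (Real.sqrt (G x))⁻¹
        + Real.exp (x/2*s) * (-(2*s*ch*sh / (2*A)) / A^2)) with hd2_def
  have hA2 : A^2 = ch^2*c^2 + sh^2*sn^2 := by
    rw [hA_def, Real.sq_sqrt (hGpos x).le]
  have hE2 : E^2 = ch + sh := by
    rw [hch_def, hsh_def, Real.cosh_add_sinh, hE_def, sq, ← Real.exp_add]
    ring_nf
  have hEinv : Real.exp (-(x/2)*s) = E⁻¹ := by
    rw [hE_def, ← Real.exp_neg]
    ring_nf
  have hchsh : ch^2 - sh^2 = 1 := by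
    rw [hch_def, hsh_def]; exact Real.cosh_sq_sub_sinh_sq _
  have hzval : Complex.cosh ((x:ℂ) * Real.sin γ - Complex.I * γ / 2)
      = ((ch*c : ℝ):ℂ) - Complex.I * ((sh*sn : ℝ):ℂ) := by
    rw [show ((x:ℂ) * Real.sin γ - Complex.I * γ / 2)
        = ((x*s : ℝ):ℂ) - Complex.I * ((γ/2 : ℝ):ℂ) by push_cast [hs_def]; ring,
      coshz_sub, ← hch_def, ← hc_def, ← hsh_def, ← hsn_def]
  have hzbval : Complex.cosh ((x:ℂ) * Real.sin γ + Complex.I * γ / 2)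
      = ((ch*c : ℝ):ℂ) + Complex.I * ((sh*sn : ℝ):ℂ) := by
    rw [show ((x:ℂ) * Real.sin γ + Complex.I * γ / 2)
        = ((x*s : ℝ):ℂ) + Complex.I * ((γ/2 : ℝ):ℂ) by push_cast [hs_def]; ring,
      coshz_add, ← hch_def, ← hc_def, ← hsh_def, ← hsn_def]
  have hexpI : Complex.exp (Complex.I * γ / 2) = ((c:ℝ):ℂ) + ((sn:ℝ):ℂ) * Complex.I := by
    rw [show Complex.I * (γ:ℂ) / 2 = ((γ/2 : ℝ):ℂ) * Complex.I by push_cast; ring,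
      Complex.exp_mul_I, hc_def, hsn_def, ← Complex.ofReal_cos, ← Complex.ofReal_sin]
  have hexpmI : Complex.exp (-Complex.I * γ / 2) = ((c:ℝ):ℂ) - ((sn:ℝ):ℂ) * Complex.I := by
    rw [show -Complex.I * (γ:ℂ) / 2 = ((-(γ/2) : ℝ):ℂ) * Complex.I by push_cast; ring,
      Complex.exp_mul_I, hc_def, hsn_def, ← Complex.ofReal_cos, ← Complex.ofReal_sin]
    push_cast
    rw [Complex.cos_neg, Complex.sin_neg]
    ring
  have hz2 : Complex.cosh ((x:ℂ) * Real.sin γ + -(Complex.I * γ / 2))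
      = ((ch*c : ℝ):ℂ) - Complex.I * ((sh*sn : ℝ):ℂ) := by
    rw [show ((x:ℂ) * Real.sin γ + -(Complex.I * γ / 2))
        = ((x:ℂ) * Real.sin γ - Complex.I * γ / 2) by ring]
    exact hzval
  have hexpmI2 : Complex.exp (-(Complex.I * γ / 2)) = ((c:ℝ):ℂ) - ((sn:ℝ):ℂ) * Complex.I := by
    rw [show (-(Complex.I * (γ:ℂ) / 2)) = -Complex.I * (γ:ℂ) / 2 by ring]
    exact hexpmI
  have habs2 : ‖Complex.cosh ((x:ℂ) * Real.sin γ - Complex.I * γ / 2)‖ = A := by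
    have h := habs x
    rw [sech, norm_inv, ← hA_def] at h
    exact inv_injective h
  have hEinv2 : Real.exp (-(x/2*Real.sin γ)) = E⁻¹ := by
    rw [hE_def, ← Real.exp_neg, hs_def]
  have hEexp : Real.exp (x/2*Real.sin γ) = E := by rw [hE_def, hs_def]
  have HA2 : ((A:ℝ):ℂ)^2 = ((ch:ℝ):ℂ)^2*((c:ℝ):ℂ)^2 + ((sh:ℝ):ℂ)^2*((sn:ℝ):ℂ)^2 := by
    exact_mod_cast hA2
  have HE2 : ((E:ℝ):ℂ)^2 = ((ch:ℝ):ℂ) + ((sh:ℝ):ℂ) := by exact_mod_cast hE2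
  have HCS : ((sn:ℝ):ℂ)^2 + ((c:ℝ):ℂ)^2 = 1 := by exact_mod_cast hcs
  have HCHSH : ((ch:ℝ):ℂ)^2 - ((sh:ℝ):ℂ)^2 = 1 := by exact_mod_cast hchsh
  have HI : Complex.I^2 = -1 := Complex.I_sq
  have hA0 : ((A:ℝ):ℂ) ≠ 0 := by exact_mod_cast hApos.ne'
  have hE0 : ((E:ℝ):ℂ) ≠ 0 := by exact_mod_cast hEpos.ne'
  have hchc : 0 < ch * c := mul_pos (by rw [hch_def]; exact Real.cosh_pos _) hc
  have hz0 : ((ch*c : ℝ):ℂ) - Complex.I * ((sh*sn : ℝ):ℂ) ≠ 0 := by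
    intro h
    have h2 := congrArg Complex.re h
    simp [Complex.sub_re, Complex.mul_re] at h2
    have h3 : ch * c = 0 := by rcases h2 with h3|h3 <;> simp [h3]
    exact hchc.ne' h3
  have hzb0 : ((ch*c : ℝ):ℂ) + Complex.I * ((sh*sn : ℝ):ℂ) ≠ 0 := by
    intro h
    have h2 := congrArg Complex.re h
    simp [Complex.add_re, Complex.mul_re] at h2
    have h3 : ch * c = 0 := by rcases h2 with h3|h3 <;> simp [h3]
    exact hchc.ne' h3
  have hz0c : ((ch:ℂ) * (c:ℂ) - Complex.I * ((sh:ℂ) * (sn:ℂ))) ≠ 0 := by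
    push_cast at hz0; exact hz0
  have hzb0c : ((ch:ℂ) * (c:ℂ) + Complex.I * ((sh:ℂ) * (sn:ℂ))) ≠ 0 := by
    push_cast at hzb0; exact hzb0
  have hRHS : ((-(Mmat γ x).conjTranspose).mulVec (etaVec γ x)) = ![(d1:ℂ), (d2:ℂ)] := by
    funext i
    fin_cases i
    · simp only [Matrix.mulVec, Matrix.neg_apply, Matrix.conjTranspose_apply, dotProduct,
        Fin.sum_univ_two, Mmat, etaVec, uSol, vSol, sech, Matrix.cons_val', Matrix.cons_val_zero,
        Matrix.cons_val_one, Matrix.head_cons, Matrix.head_fin_const, Matrix.empty_val',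
        Matrix.cons_val_fin_one, Matrix.of_apply, Fin.isValue, Fin.mk_zero, Fin.mk_one]
      simp only [← starRingEnd_apply, map_mul, map_add, map_sub, map_neg, map_inv₀, norm_inv, map_div₀,
        Complex.conj_I, Complex.conj_ofReal, ← Complex.cosh_conj, ← Complex.exp_conj, map_ofNat,
        neg_mul, neg_neg, neg_div, sub_neg_eq_add]
      rw [hzbval, hz2, habs2, hexpI, hexpmI2, hEinv2, hEexp, hd1_def, hEinv, ← hA_def, ← hs_def]
      push_cast
      have hP : (c:ℂ)*ch + Complex.I*sn*sh ≠ 0 := by intro h; apply hzb0c; linear_combination h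
      have hQ : (c:ℂ)*ch - Complex.I*sn*sh ≠ 0 := by intro h; apply hz0c; linear_combination h
      field_simp [hA0, hE0, hP, hQ]
      linear_combination (-2*(s:ℂ)*ch*sh) * HA2 + (-(2*(s:ℂ)*A^2+2*s*ch*sh)*sn^2*sh^2 + (s:ℂ)*A^2*E^2*(2*c^2*ch + 2*sn^2*sh*(1 - Complex.I^2))) * HI + (-2*(s:ℂ)*A^2*ch*sh) * HCS + (-2*(s:ℂ)*A^2*(c^2*ch+sn^2*sh)) * HE2
    · simp only [Matrix.mulVec, Matrix.neg_apply, Matrix.conjTranspose_apply, dotProduct,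
        Fin.sum_univ_two, Mmat, etaVec, uSol, vSol, sech, Matrix.cons_val', Matrix.cons_val_zero,
        Matrix.cons_val_one, Matrix.head_cons, Matrix.head_fin_const, Matrix.empty_val',
        Matrix.cons_val_fin_one, Matrix.of_apply, Fin.isValue, Fin.mk_zero, Fin.mk_one]
      simp only [← starRingEnd_apply, map_mul, map_add, map_sub, map_neg, map_inv₀, norm_inv, map_div₀,
        Complex.conj_I, Complex.conj_ofReal, ← Complex.cosh_conj, ← Complex.exp_conj, map_ofNat,
        neg_mul, neg_neg, neg_div, sub_neg_eq_add]
      rw [hzbval, hz2, habs2, hexpI, hexpmI2, hEinv2, hEexp, hd2_def, ← hE_def, ← hA_def, ← hs_def]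
      push_cast
      have hP : (c:ℂ)*ch + Complex.I*sn*sh ≠ 0 := by intro h; apply hzb0c; linear_combination h
      have hQ : (c:ℂ)*ch - Complex.I*sn*sh ≠ 0 := by intro h; apply hz0c; linear_combination h
      field_simp [hA0, hE0, hP, hQ]
      linear_combination ((s:ℂ)*A^2*(2*c^2*ch + 2*sn^2*sh*(Complex.I^2-1)) - (s:ℂ)*sn^2*sh^2*E^2*(2*A^2 - 2*ch*sh)) * HI + (-(s:ℂ)*E^2*(2*A^2 - 2*ch*sh) + 2*s*A^2*(ch+sh)) * HA2 + (2*(s:ℂ)*A^2*(A^2 - ch*sh)) * HE2 + (2*(s:ℂ)*A^2*(-sh + (ch+sh)*c^2)) * HCHSH + (2*(s:ℂ)*A^2*((ch+sh)*sh^2 + sh)) * HCS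
  rw [hRHS]
  apply hasDerivAt_pi.mpr
  intro i
  fin_cases i
  · simp only [etaVec, Matrix.cons_val_zero]
    apply HasDerivAt.ofReal_comp
    have heq : (fun y : ℝ => Real.exp (-(y / 2) * Real.sin γ)
        * ‖sech ((y:ℂ) * Real.sin γ - Complex.I * γ / 2)‖)
        = fun y => Real.exp (-(y/2)*s) * (Real.sqrt (G y))⁻¹ := by
      funext y; rw [habs y, hs_def]
    rw [heq]
    exact hf1
  · simp only [etaVec, Matrix.cons_val_one, Matrix.head_cons]
    apply HasDerivAt.ofReal_comp
    have heq : (fun y : ℝ => -(Real.exp (y / 2 * Real.sin γ)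
        * ‖sech ((y:ℂ) * Real.sin γ - Complex.I * γ / 2)‖))
        = fun y => -(Real.exp (y/2*s) * (Real.sqrt (G y))⁻¹) := by
      funext y; rw [habs y, hs_def]
    rw [heq]
    exact hf2
end

section
/- Let γ ∈ (0,π) and Q(x) = |sech(x sin γ - iγ/2)|. The vector ξ_γ(x) with components ξ₁(x) = e^{(x/2) sin γ}(e^{-2x sin γ} - x sin(2γ)) Q(x) and ξ₂(x) = -e^{-(x/2) sin γ}(e^{2x sin γ} + 2 cos γ + x sin(2γ)) Q(x) satisfies ξ_γ'(x) = M_γ(x) ξ_γ(x) for all x ∈ ℝ, and ξ_γ is unbounded as |x| → ∞. -/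
noncomputable def xiVec (γ x : ℝ) : Fin 2 → ℂ :=
  ![((Real.exp (x / 2 * Real.sin γ) * (Real.exp (-(2 * x) * Real.sin γ) - x * Real.sin (2 * γ)) *
      ‖sech ((x : ℂ) * Real.sin γ - Complex.I * γ / 2)‖ : ℝ) : ℂ),
    ((-(Real.exp (-(x / 2) * Real.sin γ) *
      (Real.exp (2 * x * Real.sin γ) + 2 * Real.cos γ + x * Real.sin (2 * γ)) *
      ‖sech ((x : ℂ) * Real.sin γ - Complex.I * γ / 2)‖) : ℝ) : ℂ)]

/-! ### Auxiliary definitions -/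

noncomputable def Dfun (γ x : ℝ) : ℝ := (Real.cosh (2 * (x * Real.sin γ)) + Real.cos γ) / 2

noncomputable def Qfun (γ x : ℝ) : ℝ :=
  ‖sech ((x : ℂ) * Real.sin γ - Complex.I * γ / 2)‖

noncomputable def xi1 (γ x : ℝ) : ℝ :=
  Real.exp (x / 2 * Real.sin γ) * (Real.exp (-(2 * x) * Real.sin γ) - x * Real.sin (2 * γ)) *
    Qfun γ x

noncomputable def xi2 (γ x : ℝ) : ℝ :=
  -(Real.exp (-(x / 2) * Real.sin γ) *
      (Real.exp (2 * x * Real.sin γ) + 2 * Real.cos γ + x * Real.sin (2 * γ)) * Qfun γ x)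

/-! ### Complex identities -/

lemma cosh_prod (γ x : ℝ) :
    Complex.cosh ((x : ℂ) * Real.sin γ + Complex.I * γ / 2) *
      Complex.cosh ((x : ℂ) * Real.sin γ - Complex.I * γ / 2) = ((Dfun γ x : ℝ) : ℂ) := by
  have hb : Complex.cosh (Complex.I * γ / 2) = ((Real.cos (γ / 2) : ℝ) : ℂ) := by
    rw [show Complex.I * γ / 2 = (((γ / 2 : ℝ)) : ℂ) * Complex.I by push_cast; ring,
      Complex.cosh_mul_I, Complex.ofReal_cos]
  have hb' : Complex.sinh (Complex.I * γ / 2) = ((Real.sin (γ / 2) : ℝ) : ℂ) * Complex.I := by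
    rw [show Complex.I * γ / 2 = (((γ / 2 : ℝ)) : ℂ) * Complex.I by push_cast; ring,
      Complex.sinh_mul_I, Complex.ofReal_sin]
  have hca : Complex.cosh ((x : ℂ) * Real.sin γ) = ((Real.cosh (x * Real.sin γ) : ℝ) : ℂ) := by
    rw [Complex.ofReal_cosh]; push_cast; ring_nf
  have hsa : Complex.sinh ((x : ℂ) * Real.sin γ) = ((Real.sinh (x * Real.sin γ) : ℝ) : ℂ) := by
    rw [Complex.ofReal_sinh]; push_cast; ring_nf
  have hcosγ : Real.cos γ = 2 * Real.cos (γ / 2) ^ 2 - 1 := by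
    have := Real.cos_two_mul (γ / 2)
    rw [show 2 * (γ / 2) = γ by ring] at this
    linarith
  have hcosh2 : Real.cosh (2 * (x * Real.sin γ)) =
      Real.cosh (x * Real.sin γ) ^ 2 + Real.sinh (x * Real.sin γ) ^ 2 := Real.cosh_two_mul _
  unfold Dfun
  rw [Complex.cosh_add, Complex.cosh_sub, hb, hb', hca, hsa, hcosh2, hcosγ]
  set C := Real.cosh (x * Real.sin γ) with hCdef
  set S := Real.sinh (x * Real.sin γ) with hSdef
  set p := Real.cos (γ / 2) with hpdef
  set q := Real.sin (γ / 2) with hqdef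
  have hpyth : ((q : ℝ) : ℂ) ^ 2 + ((p : ℝ) : ℂ) ^ 2 = 1 := by
    have := Real.sin_sq_add_cos_sq (γ / 2)
    rw [← hpdef, ← hqdef] at this
    exact_mod_cast congrArg (fun r : ℝ => ((r : ℝ) : ℂ)) this
  have hch : ((C : ℝ) : ℂ) ^ 2 - ((S : ℝ) : ℂ) ^ 2 = 1 := by
    have := Real.cosh_sq_sub_sinh_sq (x * Real.sin γ)
    rw [← hCdef, ← hSdef] at this
    exact_mod_cast congrArg (fun r : ℝ => ((r : ℝ) : ℂ)) this
  push_cast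
  linear_combination (-((S : ℝ) : ℂ) ^ 2 * ((q : ℝ) : ℂ) ^ 2) * Complex.I_sq +
    (((S : ℝ) : ℂ) ^ 2) * hpyth + (((p : ℝ) : ℂ) ^ 2 - 1 / 2) * hch

lemma num1 (γ x : ℝ) :
    Complex.exp (-Complex.I * γ / 2) * Complex.cosh ((x : ℂ) * Real.sin γ - Complex.I * γ / 2) +
      Complex.exp (Complex.I * γ / 2) * Complex.cosh ((x : ℂ) * Real.sin γ + Complex.I * γ / 2) =
      ((Real.exp (-(x * Real.sin γ)) + Real.cos γ * Real.exp (x * Real.sin γ) : ℝ) : ℂ) := by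
  have hb : Complex.cosh (Complex.I * γ / 2) = ((Real.cos (γ / 2) : ℝ) : ℂ) := by
    rw [show Complex.I * γ / 2 = (((γ / 2 : ℝ)) : ℂ) * Complex.I by push_cast; ring,
      Complex.cosh_mul_I, Complex.ofReal_cos]
  have hb' : Complex.sinh (Complex.I * γ / 2) = ((Real.sin (γ / 2) : ℝ) : ℂ) * Complex.I := by
    rw [show Complex.I * γ / 2 = (((γ / 2 : ℝ)) : ℂ) * Complex.I by push_cast; ring,
      Complex.sinh_mul_I, Complex.ofReal_sin]
  have hca : Complex.cosh ((x : ℂ) * Real.sin γ) = ((Real.cosh (x * Real.sin γ) : ℝ) : ℂ) := by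
    rw [Complex.ofReal_cosh]; push_cast; ring_nf
  have hsa : Complex.sinh ((x : ℂ) * Real.sin γ) = ((Real.sinh (x * Real.sin γ) : ℝ) : ℂ) := by
    rw [Complex.ofReal_sinh]; push_cast; ring_nf
  have hep : Complex.exp (Complex.I * γ / 2) =
      ((Real.cos (γ / 2) : ℝ) : ℂ) + ((Real.sin (γ / 2) : ℝ) : ℂ) * Complex.I := by
    rw [show Complex.I * γ / 2 = (((γ / 2 : ℝ)) : ℂ) * Complex.I by push_cast; ring,
      Complex.exp_mul_I, Complex.ofReal_cos, Complex.ofReal_sin]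
  have hem : Complex.exp (-Complex.I * γ / 2) =
      ((Real.cos (γ / 2) : ℝ) : ℂ) - ((Real.sin (γ / 2) : ℝ) : ℂ) * Complex.I := by
    rw [show -Complex.I * γ / 2 = (((-(γ / 2) : ℝ)) : ℂ) * Complex.I by push_cast; ring,
      Complex.exp_mul_I, Complex.ofReal_neg, Complex.cos_neg, Complex.sin_neg,
      ← Complex.ofReal_cos, ← Complex.ofReal_sin]
    ring
  have hcosγ : Real.cos γ = 2 * Real.cos (γ / 2) ^ 2 - 1 := by
    have := Real.cos_two_mul (γ / 2)
    rw [show 2 * (γ / 2) = γ by ring] at this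
    linarith
  have hexp1 : Real.exp (x * Real.sin γ) =
      Real.cosh (x * Real.sin γ) + Real.sinh (x * Real.sin γ) := (Real.cosh_add_sinh _).symm
  have hexp2 : Real.exp (-(x * Real.sin γ)) =
      Real.cosh (x * Real.sin γ) - Real.sinh (x * Real.sin γ) := by
    rw [Real.cosh_eq, Real.sinh_eq]; ring
  rw [Complex.cosh_add, Complex.cosh_sub, hb, hb', hca, hsa, hep, hem, hexp1, hexp2, hcosγ]
  set C := Real.cosh (x * Real.sin γ) with hCdef
  set S := Real.sinh (x * Real.sin γ) with hSdef
  set p := Real.cos (γ / 2) with hpdef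
  set q := Real.sin (γ / 2) with hqdef
  have hpyth : ((q : ℝ) : ℂ) ^ 2 + ((p : ℝ) : ℂ) ^ 2 = 1 := by
    have := Real.sin_sq_add_cos_sq (γ / 2)
    rw [← hpdef, ← hqdef] at this
    exact_mod_cast congrArg (fun r : ℝ => ((r : ℝ) : ℂ)) this
  push_cast
  linear_combination (2 * ((S : ℝ) : ℂ) * ((q : ℝ) : ℂ) ^ 2) * Complex.I_sq +
    (-2 * ((S : ℝ) : ℂ)) * hpyth

lemma num2 (γ x : ℝ) :
    Complex.exp (-Complex.I * γ / 2) * Complex.cosh ((x : ℂ) * Real.sin γ + Complex.I * γ / 2) +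
      Complex.exp (Complex.I * γ / 2) * Complex.cosh ((x : ℂ) * Real.sin γ - Complex.I * γ / 2) =
      ((Real.exp (x * Real.sin γ) + Real.cos γ * Real.exp (-(x * Real.sin γ)) : ℝ) : ℂ) := by
  have hb : Complex.cosh (Complex.I * γ / 2) = ((Real.cos (γ / 2) : ℝ) : ℂ) := by
    rw [show Complex.I * γ / 2 = (((γ / 2 : ℝ)) : ℂ) * Complex.I by push_cast; ring,
      Complex.cosh_mul_I, Complex.ofReal_cos]
  have hb' : Complex.sinh (Complex.I * γ / 2) = ((Real.sin (γ / 2) : ℝ) : ℂ) * Complex.I := by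
    rw [show Complex.I * γ / 2 = (((γ / 2 : ℝ)) : ℂ) * Complex.I by push_cast; ring,
      Complex.sinh_mul_I, Complex.ofReal_sin]
  have hca : Complex.cosh ((x : ℂ) * Real.sin γ) = ((Real.cosh (x * Real.sin γ) : ℝ) : ℂ) := by
    rw [Complex.ofReal_cosh]; push_cast; ring_nf
  have hsa : Complex.sinh ((x : ℂ) * Real.sin γ) = ((Real.sinh (x * Real.sin γ) : ℝ) : ℂ) := by
    rw [Complex.ofReal_sinh]; push_cast; ring_nf
  have hep : Complex.exp (Complex.I * γ / 2) =
      ((Real.cos (γ / 2) : ℝ) : ℂ) + ((Real.sin (γ / 2) : ℝ) : ℂ) * Complex.I := by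
    rw [show Complex.I * γ / 2 = (((γ / 2 : ℝ)) : ℂ) * Complex.I by push_cast; ring,
      Complex.exp_mul_I, Complex.ofReal_cos, Complex.ofReal_sin]
  have hem : Complex.exp (-Complex.I * γ / 2) =
      ((Real.cos (γ / 2) : ℝ) : ℂ) - ((Real.sin (γ / 2) : ℝ) : ℂ) * Complex.I := by
    rw [show -Complex.I * γ / 2 = (((-(γ / 2) : ℝ)) : ℂ) * Complex.I by push_cast; ring,
      Complex.exp_mul_I, Complex.ofReal_neg, Complex.cos_neg, Complex.sin_neg,
      ← Complex.ofReal_cos, ← Complex.ofReal_sin]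
    ring
  have hcosγ : Real.cos γ = 2 * Real.cos (γ / 2) ^ 2 - 1 := by
    have := Real.cos_two_mul (γ / 2)
    rw [show 2 * (γ / 2) = γ by ring] at this
    linarith
  have hexp1 : Real.exp (x * Real.sin γ) =
      Real.cosh (x * Real.sin γ) + Real.sinh (x * Real.sin γ) := (Real.cosh_add_sinh _).symm
  have hexp2 : Real.exp (-(x * Real.sin γ)) =
      Real.cosh (x * Real.sin γ) - Real.sinh (x * Real.sin γ) := by
    rw [Real.cosh_eq, Real.sinh_eq]; ring
  rw [Complex.cosh_add, Complex.cosh_sub, hb, hb', hca, hsa, hep, hem, hexp1, hexp2, hcosγ]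
  set C := Real.cosh (x * Real.sin γ) with hCdef
  set S := Real.sinh (x * Real.sin γ) with hSdef
  set p := Real.cos (γ / 2) with hpdef
  set q := Real.sin (γ / 2) with hqdef
  have hpyth : ((q : ℝ) : ℂ) ^ 2 + ((p : ℝ) : ℂ) ^ 2 = 1 := by
    have := Real.sin_sq_add_cos_sq (γ / 2)
    rw [← hpdef, ← hqdef] at this
    exact_mod_cast congrArg (fun r : ℝ => ((r : ℝ) : ℂ)) this
  push_cast
  linear_combination (-2 * ((S : ℝ) : ℂ) * ((q : ℝ) : ℂ) ^ 2) * Complex.I_sq +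
    (2 * ((S : ℝ) : ℂ)) * hpyth

lemma Dfun_pos (γ x : ℝ) (hγ : γ ∈ Set.Ioo 0 Real.pi) : 0 < Dfun γ x := by
  have h1 : (1 : ℝ) ≤ Real.cosh (2 * (x * Real.sin γ)) := Real.one_le_cosh _
  have h2 : Real.cos Real.pi < Real.cos γ :=
    Real.cos_lt_cos_of_nonneg_of_le_pi hγ.1.le le_rfl hγ.2
  rw [Real.cos_pi] at h2
  unfold Dfun
  linarith

lemma conj_cosh_m (γ x : ℝ) :
    (starRingEnd ℂ) (Complex.cosh ((x : ℂ) * Real.sin γ - Complex.I * γ / 2)) =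
      Complex.cosh ((x : ℂ) * Real.sin γ + Complex.I * γ / 2) := by
  rw [← Complex.cosh_conj]
  congr 1
  simp only [map_sub, map_add, map_mul, map_div₀, Complex.conj_I, Complex.conj_ofReal, map_ofNat]
  ring

lemma conj_cosh_p (γ x : ℝ) :
    (starRingEnd ℂ) (Complex.cosh ((x : ℂ) * Real.sin γ + Complex.I * γ / 2)) =
      Complex.cosh ((x : ℂ) * Real.sin γ - Complex.I * γ / 2) := by
  rw [← Complex.cosh_conj]
  congr 1
  simp only [map_sub, map_add, map_mul, map_div₀, Complex.conj_I, Complex.conj_ofReal, map_ofNat]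
  ring

lemma Q_eq (γ x : ℝ) : Qfun γ x = (Real.sqrt (Dfun γ x))⁻¹ := by
  unfold Qfun sech
  rw [norm_inv]
  congr 1
  have h1 : Complex.cosh ((x : ℂ) * Real.sin γ - Complex.I * γ / 2) *
      (starRingEnd ℂ) (Complex.cosh ((x : ℂ) * Real.sin γ - Complex.I * γ / 2)) =
      ((Complex.normSq (Complex.cosh ((x : ℂ) * Real.sin γ - Complex.I * γ / 2)) : ℝ) : ℂ) :=
    Complex.mul_conj _
  rw [conj_cosh_m, mul_comm, cosh_prod] at h1
  have h2 : Dfun γ x =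
      Complex.normSq (Complex.cosh ((x : ℂ) * Real.sin γ - Complex.I * γ / 2)) := by
    exact_mod_cast h1
  rw [Complex.norm_def, h2]

lemma coshm_ne (γ x : ℝ) (hγ : γ ∈ Set.Ioo 0 Real.pi) :
    Complex.cosh ((x : ℂ) * Real.sin γ - Complex.I * γ / 2) ≠ 0 := by
  have hD := Dfun_pos γ x hγ
  have hDC : ((Dfun γ x : ℝ) : ℂ) ≠ 0 := by exact_mod_cast hD.ne'
  have h : Complex.cosh ((x : ℂ) * Real.sin γ + Complex.I * γ / 2) *
      Complex.cosh ((x : ℂ) * Real.sin γ - Complex.I * γ / 2) ≠ 0 := by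
    rw [cosh_prod]; exact hDC
  exact right_ne_zero_of_mul h

lemma coshp_ne (γ x : ℝ) (hγ : γ ∈ Set.Ioo 0 Real.pi) :
    Complex.cosh ((x : ℂ) * Real.sin γ + Complex.I * γ / 2) ≠ 0 := by
  have hD := Dfun_pos γ x hγ
  have hDC : ((Dfun γ x : ℝ) : ℂ) ≠ 0 := by exact_mod_cast hD.ne'
  have h : Complex.cosh ((x : ℂ) * Real.sin γ + Complex.I * γ / 2) *
      Complex.cosh ((x : ℂ) * Real.sin γ - Complex.I * γ / 2) ≠ 0 := by
    rw [cosh_prod]; exact hDC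
  exact left_ne_zero_of_mul h

lemma M01_eq (γ x : ℝ) (hγ : γ ∈ Set.Ioo 0 Real.pi) :
    (Complex.I / 2) * (Complex.exp (-Complex.I * γ / 2) * (starRingEnd ℂ) (uSol γ x)
        - Complex.exp (Complex.I * γ / 2) * (starRingEnd ℂ) (vSol γ x)) =
      ((Real.sin γ * (Real.exp (-(x * Real.sin γ)) + Real.cos γ * Real.exp (x * Real.sin γ)) /
        (2 * Dfun γ x) : ℝ) : ℂ) := by
  have hD := Dfun_pos γ x hγ
  have hDC : ((Dfun γ x : ℝ) : ℂ) ≠ 0 := by exact_mod_cast hD.ne'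
  have hCa := coshm_ne γ x hγ
  have hCb := coshp_ne γ x hγ
  have hnum := num1 γ x
  have hprod := cosh_prod γ x
  unfold uSol vSol sech
  simp only [map_mul, map_neg, map_inv₀, Complex.conj_I, Complex.conj_ofReal,
    conj_cosh_m, conj_cosh_p]
  rw [show ((Real.sin γ * (Real.exp (-(x * Real.sin γ)) + Real.cos γ * Real.exp (x * Real.sin γ)) /
        (2 * Dfun γ x) : ℝ) : ℂ) = (Real.sin γ : ℂ) *
        ((Real.exp (-(x * Real.sin γ)) + Real.cos γ * Real.exp (x * Real.sin γ) : ℝ) : ℂ) /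
        (2 * ((Dfun γ x : ℝ) : ℂ)) by push_cast; ring]
  rw [← hnum, ← hprod]
  set Ca := Complex.cosh ((x : ℂ) * Real.sin γ - Complex.I * γ / 2)
  set Cb := Complex.cosh ((x : ℂ) * Real.sin γ + Complex.I * γ / 2)
  set em := Complex.exp (-Complex.I * γ / 2)
  set ep := Complex.exp (Complex.I * γ / 2)
  field_simp
  ring_nf
  simp only [Complex.I_sq]
  ring

lemma M10_eq (γ x : ℝ) (hγ : γ ∈ Set.Ioo 0 Real.pi) :
    (Complex.I / 2) * (Complex.exp (-Complex.I * γ / 2) * uSol γ x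
        - Complex.exp (Complex.I * γ / 2) * vSol γ x) =
      ((-(Real.sin γ * (Real.exp (x * Real.sin γ) + Real.cos γ * Real.exp (-(x * Real.sin γ))) /
        (2 * Dfun γ x)) : ℝ) : ℂ) := by
  have hD := Dfun_pos γ x hγ
  have hDC : ((Dfun γ x : ℝ) : ℂ) ≠ 0 := by exact_mod_cast hD.ne'
  have hCa := coshm_ne γ x hγ
  have hCb := coshp_ne γ x hγ
  have hnum := num2 γ x
  have hprod := cosh_prod γ x
  unfold uSol vSol sech
  rw [show ((-(Real.sin γ * (Real.exp (x * Real.sin γ) + Real.cos γ * Real.exp (-(x * Real.sin γ))) /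
        (2 * Dfun γ x)) : ℝ) : ℂ) = -((Real.sin γ : ℂ) *
        ((Real.exp (x * Real.sin γ) + Real.cos γ * Real.exp (-(x * Real.sin γ)) : ℝ) : ℂ) /
        (2 * ((Dfun γ x : ℝ) : ℂ))) by push_cast; ring]
  rw [← hnum, ← hprod]
  set Ca := Complex.cosh ((x : ℂ) * Real.sin γ - Complex.I * γ / 2)
  set Cb := Complex.cosh ((x : ℂ) * Real.sin γ + Complex.I * γ / 2)
  set em := Complex.exp (-Complex.I * γ / 2)
  set ep := Complex.exp (Complex.I * γ / 2)
  field_simp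
  ring_nf
  simp only [Complex.I_sq]
  ring

lemma quad_le_exp {t : ℝ} (ht : 0 ≤ t) : 1 + t + t ^ 2 / 4 ≤ Real.exp t := by
  have h := Real.add_one_le_exp (t / 2)
  have h2 : (0 : ℝ) ≤ t / 2 + 1 := by linarith
  have h3 := mul_self_le_mul_self h2 h
  rw [← Real.exp_add, show t / 2 + t / 2 = t by ring] at h3
  nlinarith [h3]

set_option maxHeartbeats 2000000 in
/-- The second solution ξ_γ of the linear equation, which is unbounded. -/
theorem xiVec_hasDerivAt_and_unbounded (γ : ℝ) (hγ : γ ∈ Set.Ioo 0 Real.pi) :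
    (∀ x : ℝ, HasDerivAt (fun y : ℝ => xiVec γ y) ((Mmat γ x).mulVec (xiVec γ x)) x) ∧
    (∀ C : ℝ, ∃ x : ℝ, C < ‖xiVec γ x‖) := by
  have hs : 0 < Real.sin γ := Real.sin_pos_of_pos_of_lt_pi hγ.1 hγ.2
  constructor
  · intro x
    have hD : 0 < Dfun γ x := Dfun_pos γ x hγ
    have hsqrt_pos : 0 < Real.sqrt (Dfun γ x) := Real.sqrt_pos.mpr hD
    have hsq : Real.sqrt (Dfun γ x) ^ 2 = Dfun γ x := Real.sq_sqrt hD.le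
    -- derivative of D
    have hDd : HasDerivAt (fun y => Dfun γ y)
        (Real.sinh (2 * (x * Real.sin γ)) * (2 * Real.sin γ) / 2) x := by
      have h0 : HasDerivAt (fun y : ℝ => 2 * (y * Real.sin γ)) (2 * Real.sin γ) x := by
        have he : (fun y : ℝ => 2 * (y * Real.sin γ)) = fun y => (2 * Real.sin γ) * y := by
          funext y; ring
        rw [he]
        simpa using (hasDerivAt_id x).const_mul (2 * Real.sin γ)
      have h1 : HasDerivAt (fun y : ℝ => Real.cosh (2 * (y * Real.sin γ)))
          (Real.sinh (2 * (x * Real.sin γ)) * (2 * Real.sin γ)) x :=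
        (Real.hasDerivAt_cosh _).comp x h0
      have h2 : HasDerivAt (fun y : ℝ => (Real.cosh (2 * (y * Real.sin γ)) + Real.cos γ) / 2)
          (Real.sinh (2 * (x * Real.sin γ)) * (2 * Real.sin γ) / 2) x :=
        (h1.add_const (Real.cos γ)).div_const 2
      exact h2
    -- derivative of Q
    have hQd : HasDerivAt (fun y => Qfun γ y)
        (-(Real.sin γ * Real.sinh (2 * (x * Real.sin γ))) / (2 * Dfun γ x) * Qfun γ x) x := by
      have h1 : HasDerivAt (fun y => Real.sqrt (Dfun γ y))
          (1 / (2 * Real.sqrt (Dfun γ x)) * (Real.sinh (2 * (x * Real.sin γ)) *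
            (2 * Real.sin γ) / 2)) x := (Real.hasDerivAt_sqrt hD.ne').comp x hDd
      have h2 : HasDerivAt (fun y => (Real.sqrt (Dfun γ y))⁻¹)
          (-(1 / (2 * Real.sqrt (Dfun γ x)) * (Real.sinh (2 * (x * Real.sin γ)) *
            (2 * Real.sin γ) / 2)) / Real.sqrt (Dfun γ x) ^ 2) x := h1.inv hsqrt_pos.ne'
      have hfun : (fun y => Qfun γ y) = fun y => (Real.sqrt (Dfun γ y))⁻¹ :=
        funext fun y => Q_eq γ y
      rw [hfun, Q_eq]
      convert h2 using 1
      set r := Real.sqrt (Dfun γ x) with hr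
      have hr0 : r ≠ 0 := hsqrt_pos.ne'
      rw [← hsq]
      field_simp
    set s := Real.sin γ with hs_def
    set c := Real.cos γ with hc_def
    -- scalar derivatives
    have hE1d : HasDerivAt (fun y : ℝ => Real.exp (y / 2 * s))
        (s / 2 * Real.exp (x / 2 * s)) x := by
      have h0 : HasDerivAt (fun y : ℝ => y / 2 * s) (s / 2) x := by
        have he : (fun y : ℝ => y / 2 * s) = fun y => (s / 2) * y := by funext y; ring
        rw [he]; simpa using (hasDerivAt_id x).const_mul (s / 2)
      have h1 : HasDerivAt (fun y : ℝ => Real.exp (y / 2 * s))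
          (Real.exp (x / 2 * s) * (s / 2)) x := (Real.hasDerivAt_exp _).comp x h0
      convert h1 using 1; ring
    have hEmd : HasDerivAt (fun y : ℝ => Real.exp (-(y / 2) * s))
        (-(s / 2) * Real.exp (-(x / 2) * s)) x := by
      have h0 : HasDerivAt (fun y : ℝ => -(y / 2) * s) (-(s / 2)) x := by
        have he : (fun y : ℝ => -(y / 2) * s) = fun y => (-(s / 2)) * y := by funext y; ring
        rw [he]; simpa using (hasDerivAt_id x).const_mul (-(s / 2))
      have h1 : HasDerivAt (fun y : ℝ => Real.exp (-(y / 2) * s))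
          (Real.exp (-(x / 2) * s) * (-(s / 2))) x := (Real.hasDerivAt_exp _).comp x h0
      convert h1 using 1; ring
    have had : HasDerivAt (fun y : ℝ => Real.exp (-(2 * y) * s) - y * Real.sin (2 * γ))
        (-(2 * s) * Real.exp (-(2 * x) * s) - Real.sin (2 * γ)) x := by
      have h0 : HasDerivAt (fun y : ℝ => -(2 * y) * s) (-(2 * s)) x := by
        have he : (fun y : ℝ => -(2 * y) * s) = fun y => (-(2 * s)) * y := by funext y; ring
        rw [he]; simpa using (hasDerivAt_id x).const_mul (-(2 * s))
      have h1 : HasDerivAt (fun y : ℝ => Real.exp (-(2 * y) * s))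
          (Real.exp (-(2 * x) * s) * (-(2 * s))) x := (Real.hasDerivAt_exp _).comp x h0
      have h2 : HasDerivAt (fun y : ℝ => y * Real.sin (2 * γ)) (Real.sin (2 * γ)) x := by
        simpa using (hasDerivAt_id x).mul_const (Real.sin (2 * γ))
      exact (h1.sub h2).congr_deriv (by ring)
    have hbd : HasDerivAt (fun y : ℝ => Real.exp (2 * y * s) + 2 * c + y * Real.sin (2 * γ))
        (2 * s * Real.exp (2 * x * s) + Real.sin (2 * γ)) x := by
      have h0 : HasDerivAt (fun y : ℝ => 2 * y * s) (2 * s) x := by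
        have he : (fun y : ℝ => 2 * y * s) = fun y => (2 * s) * y := by funext y; ring
        rw [he]; simpa using (hasDerivAt_id x).const_mul (2 * s)
      have h1 : HasDerivAt (fun y : ℝ => Real.exp (2 * y * s))
          (Real.exp (2 * x * s) * (2 * s)) x := (Real.hasDerivAt_exp _).comp x h0
      have h2 : HasDerivAt (fun y : ℝ => y * Real.sin (2 * γ)) (Real.sin (2 * γ)) x := by
        simpa using (hasDerivAt_id x).mul_const (Real.sin (2 * γ))
      exact ((h1.add_const (2 * c)).add h2).congr_deriv (by ring)
    have hx1d : HasDerivAt (fun y => xi1 γ y)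
        ((s / 2 * Real.exp (x / 2 * s) * (Real.exp (-(2 * x) * s) - x * Real.sin (2 * γ)) +
          Real.exp (x / 2 * s) * (-(2 * s) * Real.exp (-(2 * x) * s) - Real.sin (2 * γ))) *
            Qfun γ x +
          Real.exp (x / 2 * s) * (Real.exp (-(2 * x) * s) - x * Real.sin (2 * γ)) *
            (-(s * Real.sinh (2 * (x * s))) / (2 * Dfun γ x) * Qfun γ x)) x :=
      (hE1d.mul had).mul hQd
    have hx2d : HasDerivAt (fun y => xi2 γ y)
        (-((-(s / 2) * Real.exp (-(x / 2) * s) *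
            (Real.exp (2 * x * s) + 2 * c + x * Real.sin (2 * γ)) +
          Real.exp (-(x / 2) * s) * (2 * s * Real.exp (2 * x * s) + Real.sin (2 * γ))) *
            Qfun γ x +
          Real.exp (-(x / 2) * s) * (Real.exp (2 * x * s) + 2 * c + x * Real.sin (2 * γ)) *
            (-(s * Real.sinh (2 * (x * s))) / (2 * Dfun γ x) * Qfun γ x))) x :=
      ((hEmd.mul hbd).mul hQd).neg
    -- exponential bookkeeping
    set E := Real.exp (x / 2 * s) with hE_def
    have hE0 : E ≠ 0 := by rw [hE_def]; exact (Real.exp_pos _).ne'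
    have h2 : Real.exp (x * s) = E ^ 2 := by
      rw [hE_def, sq, ← Real.exp_add]; congr 1; ring
    have h4 : Real.exp (2 * x * s) = E ^ 4 := by
      rw [show E ^ 4 = E ^ 2 * E ^ 2 by ring, ← h2, ← Real.exp_add]; congr 1; ring
    have h2' : Real.exp (-(x * s)) = (E ^ 2)⁻¹ := by rw [Real.exp_neg, h2]
    have h4' : Real.exp (-(2 * x) * s) = (E ^ 4)⁻¹ := by
      rw [show -(2 * x) * s = -(2 * x * s) by ring, Real.exp_neg, h4]
    have hm : Real.exp (-(x / 2) * s) = E⁻¹ := by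
      rw [show -(x / 2) * s = -(x / 2 * s) by ring, Real.exp_neg, hE_def]
    have h4a : Real.exp (2 * (x * s)) = E ^ 4 := by
      rw [show 2 * (x * s) = 2 * x * s by ring, h4]
    have hsh : Real.sinh (2 * (x * s)) = (E ^ 4 - (E ^ 4)⁻¹) / 2 := by
      rw [Real.sinh_eq, h4a, show -(2 * (x * s)) = -(2 * x) * s by ring, h4']
    have hDE : Dfun γ x = ((E ^ 4 + (E ^ 4)⁻¹) / 2 + c) / 2 := by
      unfold Dfun
      rw [Real.cosh_eq, h4a, show -(2 * (x * s)) = -(2 * x) * s by ring, h4']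
    have hs2γ : Real.sin (2 * γ) = 2 * s * c := Real.sin_two_mul γ
    have hE4pos : (0 : ℝ) < E ^ 4 := by
      have : (0 : ℝ) < E := hE_def ▸ Real.exp_pos _
      positivity
    have hsh2 : Real.sinh (2 * (x * s)) = (E ^ 8 - 1) / (2 * E ^ 4) := by
      rw [hsh]; field_simp
    have hDE2 : Dfun γ x = (E ^ 8 + 2 * c * E ^ 4 + 1) / (4 * E ^ 4) := by
      rw [hDE]; field_simp; ring
    have hpoly : E ^ 8 + 2 * c * E ^ 4 + 1 ≠ 0 := by
      have heq : E ^ 8 + 2 * c * E ^ 4 + 1 = 4 * E ^ 4 * Dfun γ x := by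
        rw [hDE2]; field_simp
      rw [heq]
      positivity
    -- the two real derivative statements with matrix right-hand sides
    have hx1R : HasDerivAt (fun y => xi1 γ y)
        (-s / 2 * xi1 γ x +
          s * (Real.exp (-(x * s)) + c * Real.exp (x * s)) / (2 * Dfun γ x) * xi2 γ x) x := by
      convert hx1d using 1
      unfold xi1 xi2
      rw [← hc_def]
      rw [hs2γ, h2, h2', h4, h4', hm, hsh2, hDE2, ← hE_def]
      field_simp [hE0, hpoly]
      have hp2 : E ^ 4 * (E ^ 4 + 2 * c) + 1 ≠ 0 := by convert hpoly using 1; ring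
      field_simp [hp2]
      ring
    have hx2R : HasDerivAt (fun y => xi2 γ y)
        (-(s * (Real.exp (x * s) + c * Real.exp (-(x * s))) / (2 * Dfun γ x)) * xi1 γ x +
          s / 2 * xi2 γ x) x := by
      convert hx2d using 1
      unfold xi1 xi2
      rw [← hc_def]
      rw [hs2γ, h2, h2', h4, h4', hm, hsh2, hDE2, ← hE_def]
      field_simp [hE0, hpoly]
      have hp2 : E ^ 4 * (E ^ 4 + 2 * c) + 1 ≠ 0 := by convert hpoly using 1; ring
      field_simp [hp2]
      ring
    -- the matrix-vector product entries
    have ev0 : xiVec γ x 0 = ((xi1 γ x : ℝ) : ℂ) := by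
      simp only [xiVec, Matrix.cons_val_zero]; rfl
    have ev1 : xiVec γ x 1 = ((xi2 γ x : ℝ) : ℂ) := by
      simp only [xiVec, Matrix.cons_val_one, Matrix.head_cons]; rfl
    have hmv0 : (Mmat γ x).mulVec (xiVec γ x) 0 =
        (((-s / 2 * xi1 γ x +
          s * (Real.exp (-(x * s)) + c * Real.exp (x * s)) / (2 * Dfun γ x) * xi2 γ x) : ℝ) : ℂ) := by
      have hmv : (Mmat γ x).mulVec (xiVec γ x) 0 =
          Mmat γ x 0 0 * xiVec γ x 0 + Mmat γ x 0 1 * xiVec γ x 1 := by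
        simp [Matrix.mulVec, dotProduct, Fin.sum_univ_two]
      rw [hmv, ev0, ev1]
      have e00 : Mmat γ x 0 0 = -(s : ℂ) / 2 := by simp [Mmat, hs_def, Complex.ofReal_sin]
      have e01 : Mmat γ x 0 1 =
          ((s * (Real.exp (-(x * s)) + c * Real.exp (x * s)) / (2 * Dfun γ x) : ℝ) : ℂ) := by
        rw [show Mmat γ x 0 1 = (Complex.I / 2) *
          (Complex.exp (-Complex.I * γ / 2) * (starRingEnd ℂ) (uSol γ x)
            - Complex.exp (Complex.I * γ / 2) * (starRingEnd ℂ) (vSol γ x)) by simp [Mmat]]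
        exact M01_eq γ x hγ
      rw [e00, e01]
      push_cast
      ring
    have hmv1 : (Mmat γ x).mulVec (xiVec γ x) 1 =
        (((-(s * (Real.exp (x * s) + c * Real.exp (-(x * s))) / (2 * Dfun γ x)) * xi1 γ x +
          s / 2 * xi2 γ x) : ℝ) : ℂ) := by
      have hmv : (Mmat γ x).mulVec (xiVec γ x) 1 =
          Mmat γ x 1 0 * xiVec γ x 0 + Mmat γ x 1 1 * xiVec γ x 1 := by
        simp [Matrix.mulVec, dotProduct, Fin.sum_univ_two]
      rw [hmv, ev0, ev1]
      have e11 : Mmat γ x 1 1 = (s : ℂ) / 2 := by simp [Mmat, hs_def, Complex.ofReal_sin]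
      have e10 : Mmat γ x 1 0 =
          ((-(s * (Real.exp (x * s) + c * Real.exp (-(x * s))) / (2 * Dfun γ x)) : ℝ) : ℂ) := by
        rw [show Mmat γ x 1 0 = (Complex.I / 2) *
          (Complex.exp (-Complex.I * γ / 2) * uSol γ x
            - Complex.exp (Complex.I * γ / 2) * vSol γ x) by simp [Mmat]]
        exact M10_eq γ x hγ
      rw [e11, e10]
      push_cast
      ring
    apply hasDerivAt_pi.mpr
    intro i
    fin_cases i
    · have hfun0 : (fun y => xiVec γ y 0) = fun y => ((xi1 γ y : ℝ) : ℂ) := by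
        funext y; simp only [xiVec, Matrix.cons_val_zero]; rfl
      simpa [hfun0, hmv0] using hx1R.ofReal_comp
    · have hfun1 : (fun y => xiVec γ y 1) = fun y => ((xi2 γ y : ℝ) : ℂ) := by
        funext y; simp only [xiVec, Matrix.cons_val_one, Matrix.head_cons]; rfl
      simpa [hfun1, hmv1] using hx2R.ofReal_comp
  · -- unboundedness
    intro C
    have hs1 : Real.sin γ ≤ 1 := Real.sin_le_one γ
    obtain ⟨u, hu, hu1⟩ : ∃ u : ℝ, Real.sin γ * u = 1 ∧ 1 ≤ u :=
      ⟨1 / Real.sin γ, by field_simp, by rw [le_div_iff₀ hs]; linarith⟩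
    obtain ⟨X, hXdef⟩ : ∃ X : ℝ, X = 8 * (|C| + 4) * u ^ 2 := ⟨_, rfl⟩
    have habs : C ≤ |C| := le_abs_self C
    have h0abs : (0 : ℝ) ≤ |C| := abs_nonneg C
    have hX0 : 0 ≤ X := by rw [hXdef]; positivity
    have hXs : 0 ≤ X * Real.sin γ := mul_nonneg hX0 hs.le
    have hXu : X * Real.sin γ = 8 * (|C| + 4) * u := by
      rw [hXdef]; linear_combination (8 * (|C| + 4) * u) * hu
    have hXs2 : X * Real.sin γ / 2 = 4 * (|C| + 4) * u := by linarith [hXu]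
    have husq : 1 ≤ u ^ 2 := by nlinarith [hu1]
    -- key growth estimate
    have hgrow : |C| + 2 + X < Real.exp (X * Real.sin γ / 2) := by
      have hq := quad_le_exp (t := X * Real.sin γ / 2) (by positivity)
      rw [hXs2] at hq ⊢
      have k0 : 0 ≤ 4 * (|C| + 4) * u := by nlinarith [h0abs, hu1]
      have k2 : 16 * (|C| + 4) * u ^ 2 ≤ 4 * (|C| + 4) ^ 2 * u ^ 2 := by
        nlinarith [h0abs, sq_nonneg u]
      have k3 : |C| + 2 < 8 * (|C| + 4) * u ^ 2 := by nlinarith [h0abs, husq]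
      have k4 : (4 * (|C| + 4) * u) ^ 2 / 4 = 4 * (|C| + 4) ^ 2 * u ^ 2 := by ring
      nlinarith [hq, k0, k2, k3, k4, hXdef]
    have hgrowC : C + 2 + X < Real.exp (X * Real.sin γ / 2) := by linarith [habs, hgrow]
    have hb2 : 2 + X ≤ Real.exp (2 * X * Real.sin γ) := by
      have h1 : Real.exp (X * Real.sin γ / 2) ≤ Real.exp (2 * X * Real.sin γ) := by
        apply Real.exp_le_exp.mpr; nlinarith [hXs]
      linarith [hgrow, h0abs, h1]
    refine ⟨X, ?_⟩
    have hQD : Qfun γ X = (Real.sqrt (Dfun γ X))⁻¹ := Q_eq γ X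
    have hD : 0 < Dfun γ X := Dfun_pos γ X hγ
    have hsqrt_pos : 0 < Real.sqrt (Dfun γ X) := Real.sqrt_pos.mpr hD
    have hQpos : 0 < Qfun γ X := by rw [hQD]; positivity
    -- Q lower bound
    have hDle : Dfun γ X ≤ Real.exp (2 * X * Real.sin γ) := by
      unfold Dfun
      have hc1 : Real.cos γ ≤ 1 := Real.cos_le_one γ
      have hcosh : Real.cosh (2 * (X * Real.sin γ)) ≤ Real.exp (2 * X * Real.sin γ) := by
        rw [Real.cosh_eq]
        have he1 : Real.exp (-(2 * (X * Real.sin γ))) ≤ Real.exp (2 * (X * Real.sin γ)) := by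
          apply Real.exp_le_exp.mpr; nlinarith [hXs]
        rw [show 2 * X * Real.sin γ = 2 * (X * Real.sin γ) by ring]
        linarith
      have he2 : (1 : ℝ) ≤ Real.exp (2 * X * Real.sin γ) := by
        rw [← Real.exp_zero]; apply Real.exp_le_exp.mpr; nlinarith [hXs]
      linarith
    have hsqrtle : Real.sqrt (Dfun γ X) ≤ Real.exp (X * Real.sin γ) := by
      have hsq2 : Real.exp (2 * X * Real.sin γ) = Real.exp (X * Real.sin γ) ^ 2 := by
        rw [sq, ← Real.exp_add]; congr 1; ring
      calc Real.sqrt (Dfun γ X) ≤ Real.sqrt (Real.exp (2 * X * Real.sin γ)) :=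
            Real.sqrt_le_sqrt hDle
        _ = Real.exp (X * Real.sin γ) := by rw [hsq2, Real.sqrt_sq (Real.exp_pos _).le]
    have hQge : Real.exp (-(X * Real.sin γ)) ≤ Qfun γ X := by
      rw [hQD, Real.exp_neg]
      exact inv_anti₀ hsqrt_pos hsqrtle
    -- lower bound on the second component
    have hbge : Real.exp (2 * X * Real.sin γ) - 2 - X ≤
        Real.exp (2 * X * Real.sin γ) + 2 * Real.cos γ + X * Real.sin (2 * γ) := by
      have hc2 : -1 ≤ Real.cos γ := Real.neg_one_le_cos γ
      have hsin2 : -1 ≤ Real.sin (2 * γ) := Real.neg_one_le_sin _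
      nlinarith [hX0, mul_le_mul_of_nonneg_left hsin2 hX0]
    have hb0 : 0 ≤ Real.exp (2 * X * Real.sin γ) - 2 - X := by linarith [hb2]
    have hE2pos : 0 < Real.exp (-(X / 2) * Real.sin γ) := Real.exp_pos _
    have key : Real.exp (X * Real.sin γ / 2) - (2 + X) ≤
        Real.exp (-(X / 2) * Real.sin γ) *
          (Real.exp (2 * X * Real.sin γ) + 2 * Real.cos γ + X * Real.sin (2 * γ)) * Qfun γ X := by
      have m1 : Real.exp (-(X / 2) * Real.sin γ) * (Real.exp (2 * X * Real.sin γ) - 2 - X) *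
          Real.exp (-(X * Real.sin γ)) ≤ Real.exp (-(X / 2) * Real.sin γ) *
          (Real.exp (2 * X * Real.sin γ) - 2 - X) * Qfun γ X := by
        apply mul_le_mul_of_nonneg_left hQge
        positivity
      have m2 : Real.exp (-(X / 2) * Real.sin γ) * (Real.exp (2 * X * Real.sin γ) - 2 - X) *
          Qfun γ X ≤ Real.exp (-(X / 2) * Real.sin γ) *
          (Real.exp (2 * X * Real.sin γ) + 2 * Real.cos γ + X * Real.sin (2 * γ)) * Qfun γ X := by
        have := mul_le_mul_of_nonneg_left hbge hE2pos.le
        exact mul_le_mul_of_nonneg_right this hQpos.le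
      have e1 : Real.exp (-(X / 2) * Real.sin γ) * Real.exp (2 * X * Real.sin γ) *
          Real.exp (-(X * Real.sin γ)) = Real.exp (X * Real.sin γ / 2) := by
        rw [← Real.exp_add, ← Real.exp_add]; congr 1; ring
      have e2 : Real.exp (-(X / 2) * Real.sin γ) * Real.exp (-(X * Real.sin γ)) =
          Real.exp (-(3 * (X * Real.sin γ) / 2)) := by
        rw [← Real.exp_add]; congr 1; ring
      have e3 : Real.exp (-(X / 2) * Real.sin γ) * (Real.exp (2 * X * Real.sin γ) - 2 - X) *
          Real.exp (-(X * Real.sin γ)) = Real.exp (X * Real.sin γ / 2) -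
          (2 + X) * Real.exp (-(3 * (X * Real.sin γ) / 2)) := by
        linear_combination e1 - (2 + X) * e2
      have e4 : Real.exp (-(3 * (X * Real.sin γ) / 2)) ≤ 1 := by
        rw [← Real.exp_zero]; apply Real.exp_le_exp.mpr; nlinarith [hXs]
      have e5 : Real.exp (X * Real.sin γ / 2) - (2 + X) ≤
          Real.exp (X * Real.sin γ / 2) - (2 + X) * Real.exp (-(3 * (X * Real.sin γ) / 2)) := by
        nlinarith [hX0, Real.exp_pos (-(3 * (X * Real.sin γ) / 2))]
      calc Real.exp (X * Real.sin γ / 2) - (2 + X)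
          ≤ Real.exp (X * Real.sin γ / 2) -
            (2 + X) * Real.exp (-(3 * (X * Real.sin γ) / 2)) := e5
        _ = Real.exp (-(X / 2) * Real.sin γ) * (Real.exp (2 * X * Real.sin γ) - 2 - X) *
            Real.exp (-(X * Real.sin γ)) := e3.symm
        _ ≤ _ := le_trans m1 m2
    -- conclude
    have hnorm : ‖xiVec γ X 1‖ ≤ ‖xiVec γ X‖ := norm_le_pi_norm (xiVec γ X) 1
    have hv1 : xiVec γ X 1 = ((xi2 γ X : ℝ) : ℂ) := by
      simp only [xiVec, Matrix.cons_val_one, Matrix.head_cons]; rfl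
    have habs1 : ‖xiVec γ X 1‖ = |xi2 γ X| := by
      rw [hv1, Complex.norm_real, Real.norm_eq_abs]
    have hxi2abs : Real.exp (X * Real.sin γ / 2) - (2 + X) ≤ |xi2 γ X| := by
      unfold xi2
      rw [abs_neg]
      have hprod_nonneg : 0 ≤ Real.exp (-(X / 2) * Real.sin γ) *
          (Real.exp (2 * X * Real.sin γ) + 2 * Real.cos γ + X * Real.sin (2 * γ)) * Qfun γ X := by
        have hnn : 0 ≤ Real.exp (2 * X * Real.sin γ) + 2 * Real.cos γ + X * Real.sin (2 * γ) := by
          linarith [hbge, hb0]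
        positivity
      rw [abs_of_nonneg hprod_nonneg]
      exact key
    have hfin : C < Real.exp (X * Real.sin γ / 2) - (2 + X) := by linarith [hgrowC]
    calc C < Real.exp (X * Real.sin γ / 2) - (2 + X) := hfin
      _ ≤ |xi2 γ X| := hxi2abs
      _ = ‖xiVec γ X 1‖ := habs1.symm
      _ ≤ ‖xiVec γ X‖ := hnorm
end

section
/- Let λ = δ e^{iγ/2} with δ > 0 and γ ∈ (0,π), and let φ = (φ₁,φ₂)ᵗ with φ₁(x,t) = exp((i/4)(λ²-λ⁻²)x + (i/4)(λ²+λ⁻²)t), φ₂(x,t) = exp(-(i/4)(λ²-λ⁻²)x - (i/4)(λ²+λ⁻²)t). Then the Bäcklund expressions u = 2i δ⁻¹ sin γ · conj(φ₁)φ₂ / (e^{iγ/2}|φ₁|² + e^{-iγ/2}|φ₂|²) and v = -2i δ sin γ · conj(φ₁)φ₂ / (e^{-iγ/2}|φ₁|² + e^{iγ/2}|φ₂|²) equal the MTM soliton: u(x,t) = i δ⁻¹ sin γ sech(α(x+νt) - iγ/2) e^{-iβ(t+νx)} and v(x,t) = -i δ sin γ sech(α(x+νt) + iγ/2) e^{-iβ(t+νx)},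 where ν = (δ²-δ⁻²)/(δ²+δ⁻²), α = ((δ²+δ⁻²)/2) sin γ, β = ((δ²+δ⁻²)/2) cos γ. -/
private lemma aux_inv (D C S : ℂ) (hD : D ≠ 0) (hpy : C^2 + S^2 = 1) :
    D⁻¹ * (C - S*Complex.I) * (D * (C + S*Complex.I)) = 1 := by
  field_simp
  linear_combination hpy - S^2 * Complex.I_sq

private lemma aux_cosh (a b : ℝ) : Complex.cosh ((a:ℂ) + (b:ℂ)*Complex.I)
    = ((Real.cosh a * Real.cos b : ℝ) : ℂ) + ((Real.sinh a * Real.sin b : ℝ) : ℂ) * Complex.I := by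
  rw [Complex.cosh_add, Complex.cosh_mul_I, Complex.sinh_mul_I]
  push_cast; ring

private lemma aux_cosh_ne (a b : ℝ) (hb : Real.cos b ≠ 0) :
    Complex.cosh ((a:ℂ) + (b:ℂ)*Complex.I) ≠ 0 := by
  rw [aux_cosh]
  intro h
  have h1 := congrArg Complex.re h
  simp at h1
  rcases h1 with h1 | h1
  · exact absurd h1 (ne_of_gt (Real.cosh_pos a))
  · exact hb h1

private lemma aux_final (A B C Ch W D E1 E2 : ℂ) (hCh : Ch ≠ 0)
    (hE : E1 * E2 = W) (hD : D = 2 * Ch) :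
    2 * A * B * C * E1 * E2 / D = A * B * C * Ch⁻¹ * W := by
  rw [hD, mul_assoc (2*A*B*C), hE]
  field_simp

private lemma aux_final2 (A B C Ch W D E1 E2 : ℂ) (hCh : Ch ≠ 0)
    (hE : E1 * E2 = W) (hD : D = 2 * Ch) :
    -(2 * A * B * C * E1 * E2) / D = -A * B * C * Ch⁻¹ * W := by
  rw [hD, mul_assoc (2*A*B*C), hE]
  field_simp

/-- The Bäcklund transformation applied to the zero solution with the free
exponential Lax vector produces the one-soliton solution of the MTM system. -/
theorem backlund_zero_to_soliton (δ γ : ℝ) (hδ : 0 < δ) (hγ : γ ∈ Set.Ioo 0 Real.pi)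
    (l : ℂ) (hl : l = (δ : ℂ) * Complex.exp (Complex.I * γ / 2))
    (φ₁ φ₂ : ℝ → ℝ → ℂ)
    (hφ₁ : ∀ x t : ℝ, φ₁ x t = Complex.exp ((Complex.I / 4) * (l ^ 2 - (l ^ 2)⁻¹) * x +
      (Complex.I / 4) * (l ^ 2 + (l ^ 2)⁻¹) * t))
    (hφ₂ : ∀ x t : ℝ, φ₂ x t = Complex.exp (-((Complex.I / 4) * (l ^ 2 - (l ^ 2)⁻¹) * x) -
      (Complex.I / 4) * (l ^ 2 + (l ^ 2)⁻¹) * t))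
    (ν α β : ℝ)
    (hν : ν = (δ ^ 2 - (δ ^ 2)⁻¹) / (δ ^ 2 + (δ ^ 2)⁻¹))
    (hα : α = (δ ^ 2 + (δ ^ 2)⁻¹) / 2 * Real.sin γ)
    (hβ : β = (δ ^ 2 + (δ ^ 2)⁻¹) / 2 * Real.cos γ) :
    ∀ x t : ℝ,
      (2 * Complex.I * (δ⁻¹ : ℝ) * Real.sin γ * (starRingEnd ℂ) (φ₁ x t) * φ₂ x t) /
        (Complex.exp (Complex.I * γ / 2) * ((‖φ₁ x t‖ : ℝ) : ℂ) ^ 2 +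
         Complex.exp (-Complex.I * γ / 2) * ((‖φ₂ x t‖ : ℝ) : ℂ) ^ 2)
        = Complex.I * (δ⁻¹ : ℝ) * Real.sin γ *
          sech (((α * (x + ν * t) : ℝ) : ℂ) - Complex.I * γ / 2) *
          Complex.exp (-Complex.I * β * (t + ν * x)) ∧
      (-(2 * Complex.I * (δ : ℝ) * Real.sin γ * (starRingEnd ℂ) (φ₁ x t) * φ₂ x t)) /
        (Complex.exp (-Complex.I * γ / 2) * ((‖φ₁ x t‖ : ℝ) : ℂ) ^ 2 +
         Complex.exp (Complex.I * γ / 2) * ((‖φ₂ x t‖ : ℝ) : ℂ) ^ 2)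
        = -Complex.I * (δ : ℝ) * Real.sin γ *
          sech (((α * (x + ν * t) : ℝ) : ℂ) + Complex.I * γ / 2) *
          Complex.exp (-Complex.I * β * (t + ν * x)) := by
  intro x t
  obtain ⟨hγ0, hγπ⟩ := hγ
  have hd2 : ((δ^2 : ℝ) : ℂ) ≠ 0 := by
    exact_mod_cast (pow_ne_zero 2 (ne_of_gt hδ) : (δ:ℝ)^2 ≠ 0)
  have hpy : ((Real.cos γ : ℂ))^2 + ((Real.sin γ : ℂ))^2 = 1 := by
    norm_cast
    rw [add_comm]; exact_mod_cast Real.sin_sq_add_cos_sq γ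
  have hl2 : l^2 = ((δ^2 : ℝ) : ℂ) * ((Real.cos γ : ℂ) + (Real.sin γ : ℂ) * Complex.I) := by
    rw [hl, mul_pow, ← Complex.exp_nat_mul]
    rw [show (2:ℕ) * (Complex.I * γ / 2) = (γ:ℂ) * Complex.I by push_cast; ring]
    rw [Complex.exp_mul_I, ← Complex.ofReal_cos, ← Complex.ofReal_sin]
    push_cast; ring
  have hinv : (l^2)⁻¹ = (((δ^2)⁻¹ : ℝ) : ℂ)
      * ((Real.cos γ : ℂ) - (Real.sin γ : ℂ) * Complex.I) := by
    apply inv_eq_of_mul_eq_one_left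
    rw [hl2, Complex.ofReal_inv]
    exact aux_inv _ _ _ hd2 hpy
  set θ₀ : ℝ := α * (x + ν * t) / 2 with hθ₀
  set ψ₀ : ℝ := β * (t + ν * x) / 2 with hψ₀
  have hsne : (δ:ℝ)^2 + (δ^2)⁻¹ ≠ 0 := by positivity
  have hE : (Complex.I / 4) * (l ^ 2 - (l ^ 2)⁻¹) * x + (Complex.I / 4) * (l ^ 2 + (l ^ 2)⁻¹) * t
      = ((-θ₀ : ℝ) : ℂ) + ((ψ₀ : ℝ) : ℂ) * Complex.I := by
    have hθ : θ₀ = ((δ^2 + (δ^2)⁻¹)*x + (δ^2 - (δ^2)⁻¹)*t) * Real.sin γ / 4 := by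
      rw [hθ₀, hα, hν]; field_simp; ring
    have hψ : ψ₀ = ((δ^2 + (δ^2)⁻¹)*t + (δ^2 - (δ^2)⁻¹)*x) * Real.cos γ / 4 := by
      rw [hψ₀, hβ, hν]; field_simp; ring
    rw [hinv, hl2, hθ, hψ]
    push_cast
    set C := Complex.cos (γ:ℂ)
    set S := Complex.sin (γ:ℂ)
    set D := ((δ:ℂ))^2
    set E := ((δ:ℂ)^2)⁻¹
    linear_combination ((1/4:ℂ)*((D+E)*S*x + (D-E)*S*t)) * Complex.I_sq
  have hφ1 : φ₁ x t = Complex.exp (((-θ₀ : ℝ) : ℂ) + ((ψ₀ : ℝ) : ℂ) * Complex.I) := by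
    rw [hφ₁ x t, hE]
  have hφ2 : φ₂ x t = Complex.exp (-(((-θ₀ : ℝ) : ℂ) + ((ψ₀ : ℝ) : ℂ) * Complex.I)) := by
    rw [hφ₂ x t, show -((Complex.I / 4) * (l ^ 2 - (l ^ 2)⁻¹) * x) -
      (Complex.I / 4) * (l ^ 2 + (l ^ 2)⁻¹) * t
      = -((Complex.I / 4) * (l ^ 2 - (l ^ 2)⁻¹) * x +
        (Complex.I / 4) * (l ^ 2 + (l ^ 2)⁻¹) * t) by ring, hE]
  have hconj : (starRingEnd ℂ) (φ₁ x t)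
      = Complex.exp (((-θ₀ : ℝ) : ℂ) - ((ψ₀ : ℝ) : ℂ) * Complex.I) := by
    rw [hφ1, ← Complex.exp_conj]
    congr 1
    simp [Complex.conj_I, sub_eq_add_neg]
  have habs1 : ((‖φ₁ x t‖ : ℝ) : ℂ) ^ 2 = Complex.exp ((-(2*θ₀) : ℝ) : ℂ) := by
    rw [hφ1, Complex.norm_exp]
    have : (((-θ₀ : ℝ) : ℂ) + ((ψ₀ : ℝ) : ℂ) * Complex.I).re = -θ₀ := by simp
    rw [this, ← Complex.ofReal_exp, ← Complex.ofReal_pow, ← Real.exp_nat_mul]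
    norm_num
  have habs2 : ((‖φ₂ x t‖ : ℝ) : ℂ) ^ 2 = Complex.exp (((2*θ₀) : ℝ) : ℂ) := by
    rw [hφ2, Complex.norm_exp]
    have : (-(((-θ₀ : ℝ) : ℂ) + ((ψ₀ : ℝ) : ℂ) * Complex.I)).re = θ₀ := by simp
    rw [this, ← Complex.ofReal_exp, ← Complex.ofReal_pow, ← Real.exp_nat_mul]
    norm_num
  have hc2 : Real.cos (-(γ/2)) ≠ 0 := by
    rw [Real.cos_neg]
    apply ne_of_gt
    apply Real.cos_pos_of_mem_Ioo
    constructor <;> [linarith [Real.pi_pos]; linarith]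
  have hc2' : Real.cos (γ/2) ≠ 0 := by rwa [Real.cos_neg] at hc2
  -- the two cosh arguments
  have hz1 : ((α * (x + ν * t) : ℝ) : ℂ) - Complex.I * γ / 2
      = (((2*θ₀) : ℝ) : ℂ) + ((-(γ/2) : ℝ) : ℂ) * Complex.I := by
    rw [hθ₀]; push_cast; ring
  have hz2 : ((α * (x + ν * t) : ℝ) : ℂ) + Complex.I * γ / 2
      = (((2*θ₀) : ℝ) : ℂ) + (((γ/2) : ℝ) : ℂ) * Complex.I := by
    rw [hθ₀]; push_cast; ring
  have hch1 : Complex.cosh ((((2*θ₀) : ℝ) : ℂ) + ((-(γ/2) : ℝ) : ℂ) * Complex.I) ≠ 0 :=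
    aux_cosh_ne _ _ hc2
  have hch2 : Complex.cosh ((((2*θ₀) : ℝ) : ℂ) + (((γ/2) : ℝ) : ℂ) * Complex.I) ≠ 0 :=
    aux_cosh_ne _ _ hc2'
  have hprod : Complex.exp (((-θ₀ : ℝ) : ℂ) - ((ψ₀ : ℝ) : ℂ) * Complex.I) *
      Complex.exp (-(((-θ₀ : ℝ) : ℂ) + ((ψ₀ : ℝ) : ℂ) * Complex.I))
      = Complex.exp (-Complex.I * β * (t + ν * x)) := by
    rw [← Complex.exp_add]
    congr 1
    rw [hψ₀]
    push_cast; ring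
  have hD1 : Complex.exp (Complex.I * γ / 2) * Complex.exp ((-(2*θ₀) : ℝ) : ℂ) +
      Complex.exp (-Complex.I * γ / 2) * Complex.exp (((2*θ₀) : ℝ) : ℂ)
      = 2 * Complex.cosh ((((2*θ₀) : ℝ) : ℂ) + ((-(γ/2) : ℝ) : ℂ) * Complex.I) := by
    rw [Complex.cosh, ← Complex.exp_add, ← Complex.exp_add]
    rw [show Complex.I * γ / 2 + ((-(2*θ₀) : ℝ) : ℂ)
      = -((((2*θ₀) : ℝ) : ℂ) + ((-(γ/2) : ℝ) : ℂ) * Complex.I) by push_cast; ring]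
    rw [show -Complex.I * γ / 2 + (((2*θ₀) : ℝ) : ℂ)
      = (((2*θ₀) : ℝ) : ℂ) + ((-(γ/2) : ℝ) : ℂ) * Complex.I by push_cast; ring]
    ring
  have hD2 : Complex.exp (-Complex.I * γ / 2) * Complex.exp ((-(2*θ₀) : ℝ) : ℂ) +
      Complex.exp (Complex.I * γ / 2) * Complex.exp (((2*θ₀) : ℝ) : ℂ)
      = 2 * Complex.cosh ((((2*θ₀) : ℝ) : ℂ) + (((γ/2) : ℝ) : ℂ) * Complex.I) := by
    rw [Complex.cosh, ← Complex.exp_add, ← Complex.exp_add]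
    rw [show -Complex.I * γ / 2 + ((-(2*θ₀) : ℝ) : ℂ)
      = -((((2*θ₀) : ℝ) : ℂ) + (((γ/2) : ℝ) : ℂ) * Complex.I) by push_cast; ring]
    rw [show Complex.I * γ / 2 + (((2*θ₀) : ℝ) : ℂ)
      = (((2*θ₀) : ℝ) : ℂ) + (((γ/2) : ℝ) : ℂ) * Complex.I by push_cast; ring]
    ring
  constructor
  · rw [habs1, habs2, hconj, hφ2, hz1, sech]
    exact aux_final _ _ _ _ _ _ _ _ hch1 hprod hD1
  · rw [habs1, habs2, hconj, hφ2, hz2, sech]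
    exact aux_final2 _ _ _ _ _ _ _ _ hch2 hprod hD2
end

section
/- For every γ ∈ (0,π), the quantity s = i e^{-iγ/2} ∫_ℝ [2 cos γ |sech(x sin γ - iγ/2)|² + sin²γ |sech(x sin γ - iγ/2)|⁴] dx equals 4i e^{-iγ/2}/sin γ; in particular s ≠ 0. -/
open MeasureTheory Filter Topology Set

lemma abs_sech_sq (γ x : ℝ) (hγ : -1 < Real.cos γ) :
    ‖sech ((x : ℂ) * Real.sin γ - Complex.I * γ / 2)‖ ^ 2
      = 2 / (Real.cosh (2 * Real.sin γ * x) + Real.cos γ) := by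
  set a : ℝ := x * Real.sin γ with ha
  have hz : (x : ℂ) * Real.sin γ - Complex.I * γ / 2 = (a : ℂ) - (↑(γ/2) : ℂ) * Complex.I := by
    push_cast [ha]; ring
  have hcosh : Complex.cosh ((x : ℂ) * Real.sin γ - Complex.I * γ / 2)
      = (↑(Real.cosh a * Real.cos (γ/2)) : ℂ) + (↑(-(Real.sinh a * Real.sin (γ/2))) : ℂ) * Complex.I := by
    rw [hz, Complex.cosh_sub, Complex.cosh_mul_I, Complex.sinh_mul_I]
    push_cast
    ring
  have hns : Complex.normSq (Complex.cosh ((x : ℂ) * Real.sin γ - Complex.I * γ / 2))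
      = (Real.cosh (2 * Real.sin γ * x) + Real.cos γ) / 2 := by
    rw [hcosh, Complex.normSq_add_mul_I]
    have h1 : Real.cosh (2 * Real.sin γ * x) = Real.cosh a ^ 2 + Real.sinh a ^ 2 := by
      rw [show 2 * Real.sin γ * x = 2 * a by rw [ha]; ring, Real.cosh_two_mul]
    have h2 : Real.cos γ = Real.cos (γ/2) ^ 2 - Real.sin (γ/2) ^ 2 := by
      rw [show γ = 2 * (γ/2) by ring, Real.cos_two_mul']
      ring_nf
    have h3 : Real.cos (γ/2) ^ 2 + Real.sin (γ/2) ^ 2 = 1 := by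
      rw [add_comm]; exact Real.sin_sq_add_cos_sq _
    have h4 : Real.cosh a ^ 2 - Real.sinh a ^ 2 = 1 := Real.cosh_sq_sub_sinh_sq a
    nlinarith [h1, h2, h3, h4]
  have hpos : 0 < Real.cosh (2 * Real.sin γ * x) + Real.cos γ := by
    nlinarith [Real.one_le_cosh (2 * Real.sin γ * x)]
  have : ‖sech ((x : ℂ) * Real.sin γ - Complex.I * γ / 2)‖ ^ 2
      = (Complex.normSq (Complex.cosh ((x : ℂ) * Real.sin γ - Complex.I * γ / 2)))⁻¹ := by
    rw [sech, norm_inv, inv_pow, Complex.sq_norm]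
  rw [this, hns]
  field_simp

section Aux
variable {s c : ℝ}

lemma Dpos (hc1 : -1 < c) (x : ℝ) : 0 < Real.cosh (2 * s * x) + c := by
  nlinarith [Real.one_le_cosh (2 * s * x)]

lemma hasDerivAt_F (hs : 0 < s) (hc1 : -1 < c) (hsc : s ^ 2 + c ^ 2 = 1) (x : ℝ) :
    HasDerivAt (fun x : ℝ => (2 / s) * (Real.sinh (2 * s * x) / (Real.cosh (2 * s * x) + c)))
      (2 * c * (2 / (Real.cosh (2 * s * x) + c))
        + s ^ 2 * (2 / (Real.cosh (2 * s * x) + c)) ^ 2) x := by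
  have hlin : HasDerivAt (fun x : ℝ => 2 * s * x) (2 * s) x := by
    simpa using (hasDerivAt_id x).const_mul (2 * s)
  have hsinh : HasDerivAt (fun x : ℝ => Real.sinh (2 * s * x))
      (Real.cosh (2 * s * x) * (2 * s)) x := (Real.hasDerivAt_sinh _).comp x hlin
  have hcosh : HasDerivAt (fun x : ℝ => Real.cosh (2 * s * x) + c)
      (Real.sinh (2 * s * x) * (2 * s)) x := by
    simpa using ((Real.hasDerivAt_cosh _).comp x hlin).add_const c
  have hD : Real.cosh (2 * s * x) + c ≠ 0 := (Dpos hc1 x).ne'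
  have : HasDerivAt (fun x : ℝ => (2 / s) * (Real.sinh (2 * s * x) / (Real.cosh (2 * s * x) + c))) _ x :=
    ((hsinh.div hcosh hD).const_mul (2 / s))
  convert this using 1
  have h1 : Real.cosh (2 * s * x) ^ 2 - Real.sinh (2 * s * x) ^ 2 = 1 :=
    Real.cosh_sq_sub_sinh_sq _
  field_simp
  linear_combination hsc - h1

lemma tendsto_F_top (hs : 0 < s) (hc1 : -1 < c) (hc2 : c < 1) :
    Tendsto (fun x : ℝ => (2 / s) * (Real.sinh (2 * s * x) / (Real.cosh (2 * s * x) + c)))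
      atTop (𝓝 (2 / s)) := by
  have hE : Tendsto (fun x : ℝ => Real.exp (-(2 * s * x))) atTop (𝓝 0) :=
    Real.tendsto_exp_atBot.comp
      ((tendsto_neg_atTop_atBot).comp (tendsto_id.const_mul_atTop (by positivity)))
  have hlim : Tendsto (fun x : ℝ =>
      (2 / s) * ((1 - Real.exp (-(2 * s * x)) ^ 2) /
        (1 + Real.exp (-(2 * s * x)) ^ 2 + 2 * c * Real.exp (-(2 * s * x)))))
      atTop (𝓝 ((2 / s) * ((1 - 0 ^ 2) / (1 + 0 ^ 2 + 2 * c * 0)))) := by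
    apply Tendsto.const_mul
    apply Tendsto.div
    · exact tendsto_const_nhds.sub (hE.pow 2)
    · exact (tendsto_const_nhds.add (hE.pow 2)).add (tendsto_const_nhds.mul hE)
    · norm_num
  have hlim' : ((2 : ℝ) / s) * ((1 - 0 ^ 2) / (1 + 0 ^ 2 + 2 * c * 0)) = 2 / s := by norm_num
  rw [hlim'] at hlim
  refine hlim.congr fun x => ?_
  congr 1
  set E := Real.exp (-(2 * s * x)) with hEdef
  have hE1 : Real.exp (2 * s * x) * E = 1 := by
    rw [hEdef, ← Real.exp_add]; norm_num
  have hEpos : 0 < E := Real.exp_pos _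
  have hnum : 1 - E ^ 2 = (2 * E) * Real.sinh (2 * s * x) := by
    rw [Real.sinh_eq]
    have : Real.exp (-(2 * s * x)) = E := rfl
    nlinarith [hE1]
  have hden : 1 + E ^ 2 + 2 * c * E = (2 * E) * (Real.cosh (2 * s * x) + c) := by
    rw [Real.cosh_eq]
    have : Real.exp (-(2 * s * x)) = E := rfl
    nlinarith [hE1]
  rw [hnum, hden, mul_div_mul_left _ _ (by positivity : (2 : ℝ) * E ≠ 0)]

lemma tendsto_F_bot (hs : 0 < s) (hc1 : -1 < c) (hc2 : c < 1) :
    Tendsto (fun x : ℝ => (2 / s) * (Real.sinh (2 * s * x) / (Real.cosh (2 * s * x) + c)))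
      atBot (𝓝 (-(2 / s))) := by
  have hE : Tendsto (fun x : ℝ => Real.exp (2 * s * x)) atBot (𝓝 0) :=
    Real.tendsto_exp_atBot.comp (tendsto_id.const_mul_atBot (by positivity))
  have hlim : Tendsto (fun x : ℝ =>
      (2 / s) * ((Real.exp (2 * s * x) ^ 2 - 1) /
        (Real.exp (2 * s * x) ^ 2 + 1 + 2 * c * Real.exp (2 * s * x))))
      atBot (𝓝 ((2 / s) * ((0 ^ 2 - 1) / (0 ^ 2 + 1 + 2 * c * 0)))) := by
    apply Tendsto.const_mul
    apply Tendsto.div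
    · exact (hE.pow 2).sub tendsto_const_nhds
    · exact ((hE.pow 2).add tendsto_const_nhds).add (tendsto_const_nhds.mul hE)
    · norm_num
  have hlim' : ((2 : ℝ) / s) * ((0 ^ 2 - 1) / (0 ^ 2 + 1 + 2 * c * 0)) = -(2 / s) := by norm_num
  rw [hlim'] at hlim
  refine hlim.congr fun x => ?_
  congr 1
  set P := Real.exp (2 * s * x) with hPdef
  have hP1 : P * Real.exp (-(2 * s * x)) = 1 := by
    rw [hPdef, ← Real.exp_add]; norm_num
  have hPpos : 0 < P := Real.exp_pos _
  have hnum : P ^ 2 - 1 = (2 * P) * Real.sinh (2 * s * x) := by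
    rw [Real.sinh_eq]; nlinarith [hP1]
  have hden : P ^ 2 + 1 + 2 * c * P = (2 * P) * (Real.cosh (2 * s * x) + c) := by
    rw [Real.cosh_eq]; nlinarith [hP1]
  rw [hnum, hden, mul_div_mul_left _ _ (by positivity : (2 : ℝ) * P ≠ 0)]

end Aux

lemma integrable_of_even {f : ℝ → ℝ} (he : ∀ x, f (-x) = f x)
    (h : IntegrableOn f (Set.Ioi 0)) : Integrable f := by
  have h1 : Integrable (Set.indicator (Set.Ioi (0:ℝ)) f) :=
    h.integrable_indicator measurableSet_Ioi
  have h2 : Integrable (fun x : ℝ => Set.indicator (Set.Ioi (0:ℝ)) f (-x)) := h1.comp_neg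
  have h3 := h2.add h1
  apply h3.congr
  have h0 : ∀ᵐ x : ℝ, x ≠ 0 := by
    refine ae_iff.2 ?_
    have he0 : {x : ℝ | ¬ x ≠ 0} = {0} := by ext x; simp
    rw [he0]
    exact measure_singleton 0
  filter_upwards [h0] with x hx
  rcases lt_trichotomy x 0 with hlt | heq | hgt
  · simp [Set.indicator_of_mem (show -x ∈ Set.Ioi (0:ℝ) by simpa using hlt),
      Set.indicator_of_notMem (show x ∉ Set.Ioi (0:ℝ) by simpa using hlt.le), he]
  · exact absurd heq hx
  · simp [Set.indicator_of_mem (show x ∈ Set.Ioi (0:ℝ) by simpa using hgt),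
      Set.indicator_of_notMem (show -x ∉ Set.Ioi (0:ℝ) by simp [hgt.le])]

lemma g_bound {s c : ℝ} (hs : 0 < s) (hc1 : -1 < c) (hc2 : c < 1) (hsc : s ^ 2 + c ^ 2 = 1)
    {x : ℝ} (hx : 0 ≤ x) :
    |2 * c * (2 / (Real.cosh (2 * s * x) + c))
        + s ^ 2 * (2 / (Real.cosh (2 * s * x) + c)) ^ 2|
      ≤ 16 / (1 - |c|) ^ 2 * Real.exp (-(2 * s) * x) := by
  set X := Real.cosh (2 * s * x) with hXdef
  set D := X + c with hDdef
  have hD : 0 < D := Dpos hc1 x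
  have hX : 1 ≤ X := Real.one_le_cosh _
  have hc : |c| < 1 := abs_lt.2 ⟨hc1, hc2⟩
  have hcn : 0 ≤ |c| := abs_nonneg c
  have hDX : (1 - |c|) * X ≤ D := by nlinarith [neg_abs_le c]
  have hE2 : Real.exp (2 * s * x) ≤ 2 * X := by
    rw [hXdef, Real.cosh_eq]
    nlinarith [Real.exp_pos (-(2 * s * x))]
  have hEE : Real.exp (2 * s * x) * Real.exp (-(2 * s) * x) = 1 := by
    rw [← Real.exp_add]; norm_num
  have hEpos : 0 < Real.exp (-(2 * s) * x) := Real.exp_pos _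
  have hgeq : 2 * c * (2 / D) + s ^ 2 * (2 / D) ^ 2 = 4 * (c * X + 1) / D ^ 2 := by
    have key : 4 * c * D + 4 * s ^ 2 = 4 * (c * X + 1) := by
      rw [hDdef]; linear_combination 4 * hsc
    calc 2 * c * (2 / D) + s ^ 2 * (2 / D) ^ 2 = (4 * c * D + 4 * s ^ 2) / D ^ 2 := by
          field_simp; ring
      _ = 4 * (c * X + 1) / D ^ 2 := by rw [key]
  rw [hgeq, abs_div, abs_of_pos (pow_pos hD 2), div_le_iff₀ (pow_pos hD 2)]
  have habs : |4 * (c * X + 1)| ≤ 8 * X := by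
    rw [abs_mul, abs_of_nonneg (by norm_num : (0:ℝ) ≤ 4)]
    have h1 : |c * X + 1| ≤ |c| * X + 1 := by
      refine (abs_add_le _ _).trans ?_
      rw [abs_mul, abs_of_nonneg (le_trans zero_le_one hX), abs_one]
    nlinarith
  have h5 : (1 - |c|) ^ 2 * X ^ 2 ≤ D ^ 2 := by
    nlinarith [mul_le_mul hDX hDX (mul_nonneg (by linarith : (0:ℝ) ≤ 1 - |c|) (by linarith : (0:ℝ) ≤ X)) hD.le]
  have h6 : 1 / 2 ≤ Real.exp (-(2 * s) * x) * X := by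
    nlinarith [mul_le_mul_of_nonneg_right hE2 hEpos.le]
  refine habs.trans ?_
  have h7 : 0 < (1 - |c|) ^ 2 := pow_pos (by linarith : (0:ℝ) < 1 - |c|) 2
  rw [div_mul_eq_mul_div, div_mul_eq_mul_div, le_div_iff₀ h7]
  nlinarith [mul_nonneg hEpos.le (sub_nonneg.2 h5),
    mul_nonneg (mul_nonneg (sub_nonneg.2 h6) h7.le) (le_trans zero_le_one hX)]

lemma integrable_g {s c : ℝ} (hs : 0 < s) (hc1 : -1 < c) (hc2 : c < 1) (hsc : s ^ 2 + c ^ 2 = 1) :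
    Integrable (fun x : ℝ => 2 * c * (2 / (Real.cosh (2 * s * x) + c))
        + s ^ 2 * (2 / (Real.cosh (2 * s * x) + c)) ^ 2) := by
  set g := fun x : ℝ => 2 * c * (2 / (Real.cosh (2 * s * x) + c))
        + s ^ 2 * (2 / (Real.cosh (2 * s * x) + c)) ^ 2 with hg
  have hDc : Continuous fun x : ℝ => Real.cosh (2 * s * x) + c := by
    exact (Real.continuous_cosh.comp (continuous_const.mul continuous_id)).add continuous_const
  have hgc : Continuous g := by
    apply Continuous.add
    · exact continuous_const.mul (continuous_const.div hDc fun x => (Dpos hc1 x).ne')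
    · exact continuous_const.mul ((continuous_const.div hDc fun x => (Dpos hc1 x).ne').pow 2)
  apply integrable_of_even
  · intro x
    simp only [hg]
    rw [show 2 * s * (-x) = -(2 * s * x) by ring, Real.cosh_neg]
  · refine Integrable.mono' (g := fun x => 16 / (1 - |c|) ^ 2 * Real.exp (-(2 * s) * x))
      ((exp_neg_integrableOn_Ioi 0 (by positivity : (0:ℝ) < 2 * s)).const_mul _)
      hgc.aestronglyMeasurable.restrict ?_
    rw [ae_restrict_iff' measurableSet_Ioi]
    exact ae_of_all _ fun x hx => by
      simpa using g_bound hs hc1 hc2 hsc (le_of_lt hx)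


/-- The transversality quantity s in the Lyapunov–Schmidt bifurcation equation equals
4i e^{-iγ/2}/sin γ; in particular s ≠ 0. -/
theorem bifurcation_transversality (γ : ℝ) (hγ : γ ∈ Set.Ioo 0 Real.pi) :
    Complex.I * Complex.exp (-Complex.I * γ / 2) *
      ((∫ x : ℝ, (2 * Real.cos γ *
          ‖sech ((x : ℂ) * Real.sin γ - Complex.I * γ / 2)‖ ^ 2 +
        (Real.sin γ) ^ 2 *
          ‖sech ((x : ℂ) * Real.sin γ - Complex.I * γ / 2)‖ ^ 4) : ℝ) : ℂ)
      = 4 * Complex.I * Complex.exp (-Complex.I * γ / 2) / (Real.sin γ : ℂ) ∧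
    Complex.I * Complex.exp (-Complex.I * γ / 2) *
      ((∫ x : ℝ, (2 * Real.cos γ *
          ‖sech ((x : ℂ) * Real.sin γ - Complex.I * γ / 2)‖ ^ 2 +
        (Real.sin γ) ^ 2 *
          ‖sech ((x : ℂ) * Real.sin γ - Complex.I * γ / 2)‖ ^ 4) : ℝ) : ℂ)
      ≠ 0 := by
  obtain ⟨hγ0, hγπ⟩ := hγ
  set s := Real.sin γ with hsdef
  set c := Real.cos γ with hcdef
  have hs : 0 < s := Real.sin_pos_of_pos_of_lt_pi hγ0 hγπ
  have hc1 : -1 < c := by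
    have := Real.cos_lt_cos_of_nonneg_of_le_pi (le_of_lt hγ0) le_rfl hγπ
    rw [Real.cos_pi] at this; exact this
  have hc2 : c < 1 := by
    have := Real.cos_lt_cos_of_nonneg_of_le_pi le_rfl (le_of_lt hγπ) hγ0
    rw [Real.cos_zero] at this; exact this
  have hsc : s ^ 2 + c ^ 2 = 1 := Real.sin_sq_add_cos_sq γ
  have hint_eq : ∀ x : ℝ,
      2 * Real.cos γ * ‖sech ((x : ℂ) * Real.sin γ - Complex.I * γ / 2)‖ ^ 2 +
        (Real.sin γ) ^ 2 * ‖sech ((x : ℂ) * Real.sin γ - Complex.I * γ / 2)‖ ^ 4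
      = 2 * c * (2 / (Real.cosh (2 * s * x) + c))
          + s ^ 2 * (2 / (Real.cosh (2 * s * x) + c)) ^ 2 := by
    intro x
    have h4 : ‖sech ((x : ℂ) * Real.sin γ - Complex.I * γ / 2)‖ ^ 4
        = (‖sech ((x : ℂ) * Real.sin γ - Complex.I * γ / 2)‖ ^ 2) ^ 2 := by ring
    rw [h4, abs_sech_sq γ x hc1]
  have hI : (∫ x : ℝ, (2 * Real.cos γ *
          ‖sech ((x : ℂ) * Real.sin γ - Complex.I * γ / 2)‖ ^ 2 +
        (Real.sin γ) ^ 2 *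
          ‖sech ((x : ℂ) * Real.sin γ - Complex.I * γ / 2)‖ ^ 4)) = 4 / s := by
    rw [integral_congr_ae (ae_of_all _ hint_eq)]
    rw [integral_of_hasDerivAt_of_tendsto (hasDerivAt_F hs hc1 hsc)
      (integrable_g hs hc1 hc2 hsc) (tendsto_F_bot hs hc1 hc2) (tendsto_F_top hs hc1 hc2)]
    ring
  rw [hI]
  have hsne : (s : ℂ) ≠ 0 := Complex.ofReal_ne_zero.2 hs.ne'
  constructor
  · push_cast
    field_simp
  · push_cast
    refine mul_ne_zero (mul_ne_zero Complex.I_ne_zero (Complex.exp_ne_zero _)) ?_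
    exact div_ne_zero (by norm_num) hsne
end
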